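/- arXiv:2504.20217 — 7 statements merged into one kernel-verified Lean document; each statement's English description precedes it below -/
import Mathlib

section
/- In a left restriction semigroupoid S, for every s, t ∈ S, the pair (s,t) is composable if and only if (s, t*) is composable. -/
/-- An (Exel) semigroupoid: a partially defined associative operation. -/
structure Sgpd (S : Type*) where
  composable : S → S → Prop
  mul : S → S → S
  assoc₁ : ∀ s t r, composable s t → composable t r →
    composable (mul s t) r ∧ composable s (mul t r) ∧ mul (mul s t) r = mul s (mul t r)
  assoc₂ : ∀ s t r, composable s t → composable (mul s t) r →
    composable t r ∧ composable s (mul t r) ∧ mul (mul s t) r = mul s (mul t r)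
  assoc₃ : ∀ s t r, composable t r → composable s (mul t r) →
    composable s t ∧ composable (mul s t) r ∧ mul (mul s t) r = mul s (mul t r)

/-- A left restriction semigroupoid. -/
structure LRSgpd (S : Type*) extends Sgpd S where
  star : S → S
  lr1 : ∀ s, composable (star s) s ∧ mul (star s) s = s
  lr2 : ∀ s t, (composable (star s) (star t) ↔ composable (star t) (star s)) ∧
    (composable (star s) (star t) → mul (star s) (star t) = mul (star t) (star s))
  lr3 : ∀ s t, composable (star s) t → star (mul (star s) t) = mul (star s) (star t)
  lr4 : ∀ s t, composable s t → mul s (star t) = mul (star (mul s t)) s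

theorem stmt0 {S : Type*} (L : LRSgpd S) (s t : S) :
    L.composable s t ↔ L.composable s (L.star t) := by
  obtain ⟨hc, he⟩ := L.lr1 t
  constructor
  · intro h
    rw [← he] at h
    exact (L.assoc₃ s (L.star t) t hc h).1
  · intro h
    have := (L.assoc₁ s (L.star t) t h hc).2.1
    rwa [he] at this
end

section
/- Every left restriction semigroupoid is categorical: for all s, t, the sets S_s = {u : (u,s) composable} and S_t = {u : (u,t) composable} are either equal or disjoint. -/
namespace LRSgpd

variable {S : Type*} (L : LRSgpd S)

/-- Composability with `s` is the same as composability with `s*`. -/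
lemma comp_star (u s : S) : L.composable u s ↔ L.composable u (L.star s) := by
  obtain ⟨h1, h2⟩ := L.lr1 s
  constructor
  · intro h
    have h' : L.composable u (L.mul (L.star s) s) := by rwa [h2]
    exact (L.assoc₃ u (L.star s) s h1 h').1
  · intro h
    have := (L.assoc₁ u (L.star s) s h h1).2.1
    rwa [h2] at this

/-- `s*` is composable with itself. -/
lemma star_comp_self (s : S) : L.composable (L.star s) (L.star s) := by
  obtain ⟨h1, h2⟩ := L.lr1 s
  have h' : L.composable (L.star s) (L.mul (L.star s) s) := by rwa [h2]
  exact (L.assoc₃ (L.star s) (L.star s) s h1 h').1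

/-- `s* · s* = s*`. -/
lemma star_mul_self (s : S) : L.mul (L.star s) (L.star s) = L.star s := by
  obtain ⟨h1, h2⟩ := L.lr1 s
  have h3 := L.lr3 s s h1
  rw [h2] at h3
  exact h3.symm

/-- `star` is idempotent. -/
lemma star_star (s : S) : L.star (L.star s) = L.star s := by
  set e := L.star s with he
  have hee : L.composable e e := L.star_comp_self s
  have heem : L.mul e e = e := L.star_mul_self s
  -- f = star e
  set f := L.star e with hf
  -- lr3 applied to (s, e) : star (e · e) = e · f
  have h3 : L.star (L.mul e e) = L.mul e f := L.lr3 s e hee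
  rw [heem] at h3
  -- so f = e·f
  -- lr4 applied to (e, e) : e · f = star (e·e) · e = f · e
  have h4 : L.mul e f = L.mul (L.star (L.mul e e)) e := L.lr4 e e hee
  rw [heem] at h4
  -- f · e = e by lr1
  have h1 : L.mul f e = e := (L.lr1 e).2
  calc f = L.mul e f := h3
    _ = L.mul f e := h4
    _ = e := h1

end LRSgpd

theorem stmt6 {S : Type*} (L : LRSgpd S) (s t : S) :
    (∀ u, L.composable u s ↔ L.composable u t) ∨
    (∀ u, ¬ (L.composable u s ∧ L.composable u t)) := by
  by_cases H : ∃ u, L.composable u s ∧ L.composable u t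
  · left
    obtain ⟨u, hus, hut⟩ := H
    set e := L.star s with he
    set f := L.star t with hf
    have hue : L.composable u e := (L.comp_star u s).1 hus
    have huf : L.composable u f := (L.comp_star u t).1 hut
    -- lr4 on (u, e): u · star e = star (u·e) · u, with star e = e
    have h4 : L.mul u e = L.mul (L.star (L.mul u e)) u := by
      have := L.lr4 u e hue
      rwa [L.star_star s] at this
    set w := L.star (L.mul u e) with hw
    -- composable w u
    have hwue : L.composable w (L.mul u e) := (L.lr1 (L.mul u e)).1
    have hwu : L.composable w u := (L.assoc₃ w u e hue hwue).1
    -- composable (w·u) f, hence composable (u·e) f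
    have h5 : L.composable (L.mul w u) f := (L.assoc₁ w u f hwu huf).1
    have h6 : L.composable (L.mul u e) f := by rwa [← h4] at h5
    -- composable e f
    have hef : L.composable e f := (L.assoc₂ u e f hue h6).1
    -- by lr2: composable f e and e·f = f·e
    have hfe : L.composable f e := ((L.lr2 s t).1).1 hef
    have hcomm : L.mul e f = L.mul f e := (L.lr2 s t).2 hef
    intro v
    rw [L.comp_star v s, L.comp_star v t, ← he, ← hf]
    constructor
    · intro hve
      have h7 : L.composable v (L.mul e f) := (L.assoc₁ v e f hve hef).2.1
      rw [hcomm] at h7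
      exact (L.assoc₃ v f e hfe h7).1
    · intro hvf
      have h7 : L.composable v (L.mul f e) := (L.assoc₁ v f e hvf hfe).2.1
      rw [← hcomm] at h7
      exact (L.assoc₃ v e f hef h7).1
  · right
    push_neg at H
    intro u hu
    exact H u hu.1 hu.2
end

section
/- Let S be a left restriction semigroupoid. Then there exists a surjective function π and a restriction embedding (injective rigid morphism preserving *) from S into the left restriction category PT^op(π) of partial maps between fibers of π. Concretely, on a graphing of S with domain function D: S → S₀, the map α sending s to (D(s), α_s, R(s)), where α_s(t) = ts on domain {t : (t,s*) composable and ts* = t}, is a restriction embedding into PT^op(D). -/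
/-- A morphism of `PT^op(π)`: a triple `(d, f, r)` with `f` a partial map from a subset
of the fiber `π⁻¹(r)` to the fiber `π⁻¹(d)`. -/
structure PTMor {X Y : Type*} (π : X → Y) where
  d : Y
  r : Y
  f : X →. X
  mem_dom : ∀ x (h : x ∈ f.Dom), π x = r
  mem_ran : ∀ x (h : x ∈ f.Dom), π ((f x).get h) = d

/-- Composition in `PT^op(π)`: `(y,g,z) ∘ (x,f,y) = (x, f ⋆ g, z)`. -/
def PTcomp {X Y : Type*} {π : X → Y} (A B : PTMor π) (h : A.d = B.r) : PTMor π where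
  d := B.d
  r := A.r
  f := B.f.comp A.f
  mem_dom := by
    intro x hx
    obtain ⟨y, hy⟩ := (PFun.mem_dom (B.f.comp A.f) x).mp hx
    rw [PFun.comp_apply] at hy
    obtain ⟨z, hz, -⟩ := Part.mem_bind_iff.mp hy
    exact A.mem_dom x ((PFun.mem_dom A.f x).mpr ⟨z, hz⟩)
  mem_ran := by
    intro x hx
    have hmem : ((B.f.comp A.f) x).get hx ∈ (A.f x).bind B.f := by
      rw [← PFun.comp_apply]
      exact Part.get_mem hx
    obtain ⟨z, hz, hw⟩ := Part.mem_bind_iff.mp hmem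
    have hzd : z ∈ B.f.Dom := (PFun.mem_dom B.f z).mpr ⟨_, hw⟩
    have h1 := B.mem_ran z hzd
    rwa [Part.get_eq_of_mem hw hzd] at h1

/-- The restriction of a morphism of `PT^op(π)`: the identity on the domain of `f`. -/
def PTstar {X Y : Type*} {π : X → Y} (A : PTMor π) : PTMor π where
  d := A.r
  r := A.r
  f := fun x => ⟨(A.f x).Dom, fun _ => x⟩
  mem_dom := fun x h => A.mem_dom x h
  mem_ran := fun x h => A.mem_dom x h

section Aux

variable {S : Type*} (L : LRSgpd S)

private lemma c_star_iff (x s : S) :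
    L.composable x s ↔ L.composable x (L.star s) := by
  constructor
  · intro h
    have h1 := L.lr1 s
    exact (L.assoc₃ x (L.star s) s h1.1 (by rw [h1.2]; exact h)).1
  · intro h
    have h1 := L.lr1 s
    have h2 := (L.assoc₁ x (L.star s) s h h1.1).2.1
    rwa [h1.2] at h2

private lemma star_comp_self (s : S) : L.composable (L.star s) (L.star s) :=
  (c_star_iff L (L.star s) s).mp (L.lr1 s).1

private lemma star_mul_self (s : S) : L.mul (L.star s) (L.star s) = L.star s := by
  have h := L.lr3 s s (L.lr1 s).1
  rw [(L.lr1 s).2] at h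
  exact h.symm

private lemma lrs_star_star (s : S) : L.star (L.star s) = L.star s := by
  have h1 : L.composable (L.star s) (L.star (L.star s)) :=
    (c_star_iff L (L.star s) (L.star s)).mp (star_comp_self L s)
  have h2 := L.lr3 s (L.star s) (star_comp_self L s)
  rw [star_mul_self L s] at h2
  have h3 := (L.lr2 s (L.star s)).2 h1
  rw [h2, h3, (L.lr1 (L.star s)).2]

private lemma comp_star_left {s t : S} (h : L.composable s t) :
    L.composable (L.star (L.mul s t)) s :=
  (L.assoc₃ (L.star (L.mul s t)) s t h (L.lr1 (L.mul s t)).1).1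

private lemma star_comp_mul {s t : S} (h : L.composable s t) :
    L.composable (L.star s) (L.mul s t) := by
  have h1 := L.lr1 s
  exact (L.assoc₂ (L.star s) s t h1.1 (by rw [h1.2]; exact h)).2.1

private lemma L4iff {s t : S} (h : L.composable s t) (x : S) :
    L.composable s x ↔ L.composable (L.star t) x := by
  have he := comp_star_left L h
  have hst : L.composable s (L.star t) := (c_star_iff L s t).mp h
  have hlr4 := L.lr4 s t h
  constructor
  · intro hx
    have h1 := (L.assoc₁ (L.star (L.mul s t)) s x he hx).1
    rw [← hlr4] at h1
    exact (L.assoc₂ s (L.star t) x hst h1).1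
  · intro hx
    have h1 := (L.assoc₁ s (L.star t) x hst hx).1
    rw [hlr4] at h1
    exact (L.assoc₂ (L.star (L.mul s t)) s x he h1).1

private lemma mul_class {s t : S} (h : L.composable s t) (x : S) :
    L.composable (L.mul s t) x ↔ L.composable t x :=
  ⟨fun hx => (L.assoc₂ s t x h hx).1, fun hx => (L.assoc₁ s t x h hx).1⟩

private lemma starmul_class {s t : S} (h : L.composable s t) (x : S) :
    L.composable (L.star (L.mul s t)) x ↔ L.composable (L.star s) x :=
  L4iff L (comp_star_left L h) x

private lemma fwd {s t u : S} (hst : L.composable s t)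
    (h1 : L.composable u (L.star s)) (h2 : L.mul u (L.star s) = u)
    (h3 : L.composable (L.mul u s) (L.star t))
    (h4 : L.mul (L.mul u s) (L.star t) = L.mul u s) :
    L.composable u (L.star (L.mul s t)) ∧ L.mul u (L.star (L.mul s t)) = u ∧
      L.mul (L.mul u s) t = L.mul u (L.mul s t) := by
  have hus : L.composable u s := (c_star_iff L u s).mpr h1
  have hA := L.assoc₁ u s t hus hst
  have hue : L.composable u (L.star (L.mul s t)) := (c_star_iff L u (L.mul s t)).mp hA.2.1
  refine ⟨hue, ?_, hA.2.2⟩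
  have hse : L.composable (L.star s) (L.star (L.mul s t)) :=
    (c_star_iff L _ _).mp (star_comp_mul L hst)
  have hsst : L.composable s (L.star t) := (c_star_iff L s t).mp hst
  have hust' : L.composable u (L.mul s (L.star t)) := (L.assoc₁ u s (L.star t) hus hsst).2.1
  have e1 : L.mul (L.star s) (L.star (L.mul s t)) = L.mul (L.star (L.mul s t)) (L.star s) :=
    (L.lr2 s (L.mul s t)).2 hse
  have e2 : L.star (L.mul (L.star (L.mul s t)) s) = L.mul (L.star (L.mul s t)) (L.star s) :=
    L.lr3 (L.mul s t) s (comp_star_left L hst)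
  have e3 : L.mul (L.star (L.mul s t)) s = L.mul s (L.star t) := (L.lr4 s t hst).symm
  have e4 := (L.assoc₁ u (L.star s) (L.star (L.mul s t)) h1 hse).2.2
  have e5 : L.mul u (L.star (L.mul s (L.star t))) =
      L.mul (L.star (L.mul u (L.mul s (L.star t)))) u := L.lr4 u (L.mul s (L.star t)) hust'
  have e6 := (L.assoc₁ u s (L.star t) hus hsst).2.2
  have e7 : L.mul u (L.star s) = L.mul (L.star (L.mul u s)) u := L.lr4 u s hus
  calc L.mul u (L.star (L.mul s t))
      = L.mul (L.mul u (L.star s)) (L.star (L.mul s t)) := by rw [h2]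
    _ = L.mul u (L.mul (L.star s) (L.star (L.mul s t))) := e4
    _ = L.mul u (L.mul (L.star (L.mul s t)) (L.star s)) := by rw [e1]
    _ = L.mul u (L.star (L.mul (L.star (L.mul s t)) s)) := by rw [e2]
    _ = L.mul u (L.star (L.mul s (L.star t))) := by rw [e3]
    _ = L.mul (L.star (L.mul u (L.mul s (L.star t)))) u := e5
    _ = L.mul (L.star (L.mul (L.mul u s) (L.star t))) u := by rw [← e6]
    _ = L.mul (L.star (L.mul u s)) u := by rw [h4]
    _ = L.mul u (L.star s) := e7.symm
    _ = u := h2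

private lemma bwd {s t u : S} (hst : L.composable s t)
    (h1 : L.composable u (L.star (L.mul s t))) (h2 : L.mul u (L.star (L.mul s t)) = u) :
    L.composable u (L.star s) ∧ L.mul u (L.star s) = u ∧
      L.composable (L.mul u s) (L.star t) ∧ L.mul (L.mul u s) (L.star t) = L.mul u s ∧
      L.mul (L.mul u s) t = L.mul u (L.mul s t) := by
  have hust : L.composable u (L.mul s t) := (c_star_iff L u (L.mul s t)).mpr h1
  obtain ⟨hus, hwt, heq⟩ := L.assoc₃ u s t hst hust
  have key : L.mul (L.star (L.mul (L.mul u s) t)) u = u := by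
    have h := L.lr4 u (L.mul s t) hust
    rw [h2, ← heq] at h
    exact h.symm
  have hcwu : L.composable (L.star (L.mul (L.mul u s) t)) u :=
    (L.assoc₃ (L.star (L.mul (L.mul u s) t)) u s hus (comp_star_left L hwt)).1
  have hcw_wt : L.composable (L.star (L.mul u s)) (L.star (L.mul (L.mul u s) t)) :=
    (c_star_iff L _ _).mp (star_comp_mul L hwt)
  have absorb : L.mul (L.star (L.mul u s)) (L.star (L.mul (L.mul u s) t)) =
      L.star (L.mul (L.mul u s) t) := by
    have e1 := L.lr3 (L.mul u s) (L.mul (L.mul u s) t) (star_comp_mul L hwt)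
    have e3 := (L.assoc₁ (L.star (L.mul u s)) (L.mul u s) t (L.lr1 (L.mul u s)).1 hwt).2.2
    rw [(L.lr1 (L.mul u s)).2] at e3
    rw [← e3] at e1
    exact e1.symm
  have key2 : L.mul (L.star (L.mul u s)) u = u := by
    have e := (L.assoc₁ (L.star (L.mul u s)) (L.star (L.mul (L.mul u s) t)) u hcw_wt hcwu).2.2
    rw [absorb, key] at e
    exact e.symm
  have val1 : L.mul u (L.star s) = u := by
    rw [L.lr4 u s hus]; exact key2
  have val2 : L.mul (L.mul u s) (L.star t) = L.mul u s := by
    rw [L.lr4 (L.mul u s) t hwt]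
    have e := (L.assoc₁ (L.star (L.mul (L.mul u s) t)) u s hcwu hus).2.2
    rw [key] at e
    exact e.symm
  exact ⟨(c_star_iff L u s).mp hus, val1, (c_star_iff L _ t).mp hwt, val2, heq⟩

/-- The setoid whose classes play the role of objects. -/
def rrel : Setoid S :=
  ⟨fun a b => ∀ x, L.composable a x ↔ L.composable b x,
    ⟨fun _ _ => Iff.rfl, fun h x => (h x).symm, fun h1 h2 x => (h1 x).trans (h2 x)⟩⟩

/-- The embedding map. -/
def amap (s : S) : PTMor (Quotient.mk (rrel L)) where
  d := Quotient.mk (rrel L) s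
  r := Quotient.mk (rrel L) (L.star s)
  f := fun u => ⟨L.composable u (L.star s) ∧ L.mul u (L.star s) = u, fun _ => L.mul u s⟩
  mem_dom := fun u h => Quotient.sound (s := rrel L) fun x => by
    have hh := L4iff L (h.1 : L.composable u (L.star s)) x
    rwa [lrs_star_star L s] at hh
  mem_ran := fun u h => Quotient.sound (s := rrel L) fun x =>
    mul_class L ((c_star_iff L u s).mpr (h.1 : L.composable u (L.star s))) x

private lemma ptext {X Y : Type*} {π : X → Y} {A B : PTMor π}
    (h1 : A.d = B.d) (h2 : A.r = B.r) (h3 : A.f = B.f) : A = B := by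
  cases A; cases B
  simp only at h1 h2 h3
  subst h1; subst h2; subst h3
  rfl

end Aux
theorem stmt14 {S : Type u} (L : LRSgpd S) :
    ∃ (Y : Type u) (π : S → Y), Function.Surjective π ∧
      ∃ α : S → PTMor π,
        Function.Injective α ∧
        (∀ s t, ∀ _ : L.composable s t, ∃ hc : (α s).d = (α t).r,
          PTcomp (α s) (α t) hc = α (L.mul s t)) ∧
        (∀ s t, (α s).d = (α t).r → L.composable s t) ∧
        (∀ s, PTstar (α s) = α (L.star s)) := by
  refine ⟨Quotient (rrel L), Quotient.mk (rrel L), fun y => Quotient.exists_rep y,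
    amap L, ?_, ?_, ?_, ?_⟩
  · -- injectivity
    intro s t h
    have hf : (amap L s).f = (amap L t).f := congrArg PTMor.f h
    have hds : ((amap L s).f (L.star s)).Dom :=
      ⟨star_comp_self L s, star_mul_self L s⟩
    have hdt : ((amap L t).f (L.star t)).Dom :=
      ⟨star_comp_self L t, star_mul_self L t⟩
    have hmem1 : L.mul (L.star s) s ∈ (amap L s).f (L.star s) := ⟨hds, rfl⟩
    rw [hf] at hmem1
    obtain ⟨hd2, hv1⟩ := hmem1
    -- hd2 : composable (star s) (star t) ∧ mul (star s) (star t) = star s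
    -- hv1 : mul (star s) t = mul (star s) s
    have hmem2 : L.mul (L.star t) t ∈ (amap L t).f (L.star t) := ⟨hdt, rfl⟩
    rw [← hf] at hmem2
    obtain ⟨hd3, hv2⟩ := hmem2
    -- hd3 : composable (star t) (star s) ∧ mul (star t) (star s) = star t
    -- hv2 : mul (star t) s = mul (star t) t
    have hst : L.star s = L.star t := by
      have := (L.lr2 s t).2 hd2.1
      rw [hd2.2, hd3.2] at this
      exact this
    have e1 : s = L.mul (L.star s) t := by
      conv_lhs => rw [← (L.lr1 s).2]
      exact hv1.symm
    rw [e1, hst, (L.lr1 t).2]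
  · -- composition
    intro s t hc
    refine ⟨Quotient.sound (s := rrel L) (fun x => L4iff L hc x), ?_⟩
    refine ptext ?_ ?_ ?_
    · exact Quotient.sound (s := rrel L) fun x => (mul_class L hc x).symm
    · exact Quotient.sound (s := rrel L) fun x => (starmul_class L hc x).symm
    · show PFun.comp (amap L t).f (amap L s).f = (amap L (L.mul s t)).f
      funext u
      rw [PFun.comp_apply]
      apply Part.ext
      intro a
      refine Iff.trans Part.mem_bind_iff ?_
      constructor
      · rintro ⟨b, ⟨hdom, hval⟩, ⟨hdom2, hval2⟩⟩
        subst hval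
        have F := fwd L hc hdom.1 hdom.2 hdom2.1 hdom2.2
        exact ⟨⟨F.1, F.2.1⟩, F.2.2.symm.trans hval2⟩
      · rintro ⟨hdom, hval⟩
        have B := bwd L hc hdom.1 hdom.2
        exact ⟨L.mul u s, ⟨⟨B.1, B.2.1⟩, rfl⟩,
          ⟨⟨B.2.2.1, B.2.2.2.1⟩, B.2.2.2.2.trans hval⟩⟩
  · -- converse composability
    intro s t h
    have hr := Quotient.exact (s := rrel L) h
    exact (hr t).mpr (L.lr1 t).1
  · -- star
    intro s
    refine ptext rfl ?_ ?_
    · show Quotient.mk (rrel L) (L.star s) = Quotient.mk (rrel L) (L.star (L.star s))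
      rw [lrs_star_star L s]
    · funext u
      apply Part.ext'
      · show (L.composable u (L.star s) ∧ L.mul u (L.star s) = u) ↔
          (L.composable u (L.star (L.star s)) ∧ L.mul u (L.star (L.star s)) = u)
        rw [lrs_star_star L s]
      · intro hA hB
        show u = L.mul u (L.star s)
        have := hB.2
        rw [lrs_star_star L s] at this
        exact this.symm
end

section
/- Let S be a left restriction semigroupoid with E = S*. The Szendrei expansion Sz(S) = {(A,a) : A a finite subset of S, a ∈ A, a* ∈ A, and every b ∈ A has b* = a*}, with product (A,a)(B,b) = ((ab)*A ∪ aB, ab) defined when (a,b) is composable, is a semigroupoid; moreover the product is well-defined, i.e., (ab)*A ∪ aB is a finite set each of whose elements c satisfies c* = (ab)*. -/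
/-- The defining condition for elements `(A, a)` of the Szendrei expansion. -/
def szCond {S : Type*} (L : LRSgpd S) (A : Finset S) (a : S) : Prop :=
  a ∈ A ∧ L.star a ∈ A ∧ ∀ b ∈ A, L.star b = L.star a

/-- The first component `(ab)*A ∪ aB` of the Szendrei product. -/
def szSet {S : Type*} [DecidableEq S] (L : LRSgpd S) (A : Finset S) (a : S)
    (B : Finset S) (b : S) : Finset S :=
  A.image (fun x => L.mul (L.star (L.mul a b)) x) ∪ B.image (fun x => L.mul a x)

namespace LRAux

variable {S : Type*} (L : LRSgpd S)

/-- `((ab)*, a)` is composable. -/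
lemma hEa {a b : S} (hab : L.composable a b) : L.composable (L.star (L.mul a b)) a :=
  (L.assoc₃ (L.star (L.mul a b)) a b hab (L.lr1 (L.mul a b)).1).1

/-- `((ab)*, a*)` is composable. -/
lemma comp_e_astar {a b : S} (hab : L.composable a b) :
    L.composable (L.star (L.mul a b)) (L.star a) :=
  (L.assoc₃ (L.star (L.mul a b)) (L.star a) a (L.lr1 a).1
    (by rw [(L.lr1 a).2]; exact hEa L hab)).1

/-- `a* (ab)* = (ab)*`. -/
lemma astar_e {a b : S} (hab : L.composable a b) :
    L.mul (L.star a) (L.star (L.mul a b)) = L.star (L.mul a b) := by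
  have h1 := L.assoc₁ (L.star a) a b (L.lr1 a).1 hab
  have h2 : L.mul (L.star a) (L.mul a b) = L.mul a b := by
    rw [← h1.2.2, (L.lr1 a).2]
  have h3 := L.lr3 a (L.mul a b) h1.2.1
  rw [h2] at h3
  exact h3.symm

/-- `(ab)* a* = (ab)*`. -/
lemma key {a b : S} (hab : L.composable a b) :
    L.mul (L.star (L.mul a b)) (L.star a) = L.star (L.mul a b) := by
  rw [(L.lr2 (L.mul a b) a).2 (comp_e_astar L hab)]
  exact astar_e L hab

/-- For `x` with `x* = a*`, `(ab)* x` is defined and has star `(ab)*`. -/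
lemma hEx {a b x : S} (hab : L.composable a b) (hx : L.star x = L.star a) :
    L.composable (L.star (L.mul a b)) x ∧
      L.star (L.mul (L.star (L.mul a b)) x) = L.star (L.mul a b) := by
  have hax : L.composable (L.star a) x := by rw [← hx]; exact (L.lr1 x).1
  have h1 := L.assoc₁ (L.star (L.mul a b)) (L.star a) x (comp_e_astar L hab) hax
  have h2 : L.mul (L.star a) x = x := by rw [← hx]; exact (L.lr1 x).2
  rw [h2] at h1
  refine ⟨h1.2.1, ?_⟩
  rw [L.lr3 (L.mul a b) x h1.2.1, hx]
  exact key L hab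

/-- For `y` with `y* = b*`, `a y` is defined and has star `(ab)*`. -/
lemma hAy {a b y : S} (hab : L.composable a b) (hy : L.star y = L.star b) :
    L.composable a y ∧ L.star (L.mul a y) = L.star (L.mul a b) := by
  have hab' : L.composable a (L.star b) :=
    (L.assoc₃ a (L.star b) b (L.lr1 b).1 (by rw [(L.lr1 b).2]; exact hab)).1
  have hby : L.composable (L.star b) y := by rw [← hy]; exact (L.lr1 y).1
  have h1 := L.assoc₁ a (L.star b) y hab' hby
  have h2 : L.mul (L.star b) y = y := by rw [← hy]; exact (L.lr1 y).2
  rw [h2] at h1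
  have hay : L.composable a y := h1.2.1
  refine ⟨hay, ?_⟩
  have e1 : L.mul a (L.star y) = L.mul (L.star (L.mul a y)) a := L.lr4 a y hay
  rw [hy] at e1
  have e2 : L.mul a (L.star b) = L.mul (L.star (L.mul a b)) a := L.lr4 a b hab
  have e3 : L.mul (L.star (L.mul a y)) a = L.mul (L.star (L.mul a b)) a := by
    rw [← e1, e2]
  have s1 := L.lr3 (L.mul a y) a (hEa L hay)
  have s2 := L.lr3 (L.mul a b) a (hEa L hab)
  rw [e3, s2] at s1
  calc L.star (L.mul a y) = L.mul (L.star (L.mul a y)) (L.star a) := (key L hay).symm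
    _ = L.mul (L.star (L.mul a b)) (L.star a) := s1.symm
    _ = L.star (L.mul a b) := key L hab


end LRAux

namespace LRAux

variable {S : Type*} [DecidableEq S] (L : LRSgpd S)

lemma szWD {A : Finset S} {a : S} {B : Finset S} {b : S}
    (hA : szCond L A a) (hB : szCond L B b) (hab : L.composable a b) :
    szCond L (szSet L A a B b) (L.mul a b) := by
  refine ⟨?_, ?_, ?_⟩
  · exact Finset.mem_union_right _ (Finset.mem_image.2 ⟨b, hB.1, rfl⟩)
  · refine Finset.mem_union_left _ (Finset.mem_image.2 ⟨L.star a, hA.2.1, ?_⟩)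
    exact key L hab
  · intro c hc
    rcases Finset.mem_union.1 hc with h | h
    · rcases Finset.mem_image.1 h with ⟨x, hx, rfl⟩
      exact (hEx L hab (hA.2.2 x hx)).2
    · rcases Finset.mem_image.1 h with ⟨y, hy, rfl⟩
      exact (hAy L hab (hB.2.2 y hy)).2

lemma szAssoc {A : Finset S} {a : S} {B : Finset S} {b : S} {C : Finset S} {c : S}
    (hA : szCond L A a) (hB : szCond L B b) (hC : szCond L C c)
    (hab : L.composable a b) (hbc : L.composable b c)
    (habc : L.composable (L.mul a b) c) (habc' : L.composable a (L.mul b c))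
    (heq : L.mul (L.mul a b) c = L.mul a (L.mul b c)) :
    szSet L (szSet L A a B b) (L.mul a b) C c
      = szSet L A a (szSet L B b C c) (L.mul b c) := by
  set g := L.star (L.mul (L.mul a b) c) with hg
  have hg' : L.star (L.mul a (L.mul b c)) = g := by rw [← heq]
  set e := L.star (L.mul a b) with he
  set h := L.star (L.mul b c) with hh
  -- pointwise identities
  have ptA : ∀ x ∈ A, L.mul g (L.mul e x) = L.mul g x := by
    intro x hx
    have hge : L.composable g e := comp_e_astar L habc
    have hex : L.composable e x := (hEx L hab (hA.2.2 x hx)).1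
    have := (L.assoc₁ g e x hge hex).2.2
    rw [← this, key L habc]
  have ptB : ∀ y ∈ B, L.mul g (L.mul a y) = L.mul a (L.mul h y) := by
    intro y hy
    have hah : L.composable a h :=
      (L.assoc₃ a h (L.mul b c) (L.lr1 (L.mul b c)).1
        (by rw [(L.lr1 (L.mul b c)).2]; exact habc')).1
    have hhy : L.composable h y := (hEx L hbc (hB.2.2 y hy)).1
    have hga : L.composable g a := by
      have := hEa L habc'
      rwa [hg'] at this
    have hay : L.composable a y := (hAy L hab (hB.2.2 y hy)).1
    have eah : L.mul a h = L.mul g a := by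
      have := L.lr4 a (L.mul b c) habc'
      rwa [hg'] at this
    have e1 := (L.assoc₁ a h y hah hhy).2.2
    have e2 := (L.assoc₁ g a y hga hay).2.2
    rw [← e2, ← e1, eah]
  have ptC : ∀ z ∈ C, L.mul (L.mul a b) z = L.mul a (L.mul b z) := by
    intro z hz
    have habz : L.composable (L.mul a b) z := (hAy L habc (hC.2.2 z hz)).1
    exact (L.assoc₂ a b z hab habz).2.2
  -- now the finset computation
  unfold szSet
  rw [Finset.image_union, Finset.image_union, Finset.image_image, Finset.image_image,
    Finset.image_image, Finset.image_image, Finset.union_assoc]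
  congr 1
  · refine Finset.image_congr (fun x hx => ?_)
    simp only [Function.comp_apply]
    rw [hg']
    exact ptA x hx
  congr 1
  · refine Finset.image_congr (fun y hy => ?_)
    simp only [Function.comp_apply]
    exact ptB y hy
  · refine Finset.image_congr (fun z hz => ?_)
    simp only [Function.comp_apply]
    exact ptC z hz

end LRAux

namespace LRAux

variable {S : Type*} [DecidableEq S] (L : LRSgpd S)

open Classical in
noncomputable def szMul (p q : {p : Finset S × S // szCond L p.1 p.2}) :
    {p : Finset S × S // szCond L p.1 p.2} :=
  if h : L.composable p.1.2 q.1.2 then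
    ⟨(szSet L p.1.1 p.1.2 q.1.1 q.1.2, L.mul p.1.2 q.1.2), szWD L p.2 q.2 h⟩
  else p

lemma szMul_pos (p q : {p : Finset S × S // szCond L p.1 p.2})
    (h : L.composable p.1.2 q.1.2) :
    szMul L p q = ⟨(szSet L p.1.1 p.1.2 q.1.1 q.1.2, L.mul p.1.2 q.1.2), szWD L p.2 q.2 h⟩ :=
  dif_pos h

lemma szMul_assoc (p q r : {p : Finset S × S // szCond L p.1 p.2})
    (hab : L.composable p.1.2 q.1.2) (hbc : L.composable q.1.2 r.1.2) :
    szMul L (szMul L p q) r = szMul L p (szMul L q r) := by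
  obtain ⟨habc, habc', heq⟩ := L.assoc₁ p.1.2 q.1.2 r.1.2 hab hbc
  rw [szMul_pos L p q hab, szMul_pos L q r hbc,
    szMul_pos L ⟨(szSet L p.1.1 p.1.2 q.1.1 q.1.2, L.mul p.1.2 q.1.2), szWD L p.2 q.2 hab⟩ r habc,
    szMul_pos L p ⟨(szSet L q.1.1 q.1.2 r.1.1 r.1.2, L.mul q.1.2 r.1.2), szWD L q.2 r.2 hbc⟩ habc']
  refine Subtype.ext (Prod.ext ?_ ?_)
  · exact szAssoc L p.2 q.2 r.2 hab hbc habc habc' heq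
  · exact heq

noncomputable def szG : Sgpd {p : Finset S × S // szCond L p.1 p.2} where
  composable p q := L.composable p.1.2 q.1.2
  mul := szMul L
  assoc₁ p q r h1 h2 := by
    obtain ⟨habc, habc', _⟩ := L.assoc₁ p.1.2 q.1.2 r.1.2 h1 h2
    refine ⟨?_, ?_, szMul_assoc L p q r h1 h2⟩
    · rw [szMul_pos L p q h1]; exact habc
    · rw [szMul_pos L q r h2]; exact habc'
  assoc₂ p q r h1 h2 := by
    rw [szMul_pos L p q h1] at h2
    have h2' : L.composable (L.mul p.1.2 q.1.2) r.1.2 := h2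
    obtain ⟨hbc, habc', _⟩ := L.assoc₂ p.1.2 q.1.2 r.1.2 h1 h2'
    refine ⟨hbc, ?_, szMul_assoc L p q r h1 hbc⟩
    rw [szMul_pos L q r hbc]; exact habc'
  assoc₃ p q r h1 h2 := by
    rw [szMul_pos L q r h1] at h2
    have h2' : L.composable p.1.2 (L.mul q.1.2 r.1.2) := h2
    obtain ⟨hab, habc, _⟩ := L.assoc₃ p.1.2 q.1.2 r.1.2 h1 h2'
    refine ⟨hab, ?_, szMul_assoc L p q r hab h1⟩
    rw [szMul_pos L p q hab]; exact habc

end LRAux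


theorem stmt16 {S : Type*} [DecidableEq S] (L : LRSgpd S) :
    -- the product is well defined
    (∀ A a B b, szCond L A a → szCond L B b → L.composable a b →
      szCond L (szSet L A a B b) (L.mul a b)) ∧
    -- Sz(S) is a semigroupoid
    ∃ G : Sgpd {p : Finset S × S // szCond L p.1 p.2},
      (∀ p q, G.composable p q ↔ L.composable p.1.2 q.1.2) ∧
      (∀ p q, G.composable p q →
        (G.mul p q).1 = (szSet L p.1.1 p.1.2 q.1.1 q.1.2, L.mul p.1.2 q.1.2)) := by
  refine ⟨fun A a B b hA hB hab => LRAux.szWD L hA hB hab,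
    LRAux.szG L, fun p q => Iff.rfl, fun p q h => ?_⟩
  have h' : L.composable p.1.2 q.1.2 := h
  show (LRAux.szMul L p q).1 = _
  rw [LRAux.szMul_pos L p q h']
end

section
/- Let S be a left restriction semigroupoid. Then the Szendrei expansion Sz(S), with (A,a)* := (A, a*), is itself a left restriction semigroupoid. -/
section Szendrei

variable {S : Type*} (L : LRSgpd S)

local infixl:70 " ⬝ " => L.mul
local postfix:max "°" => L.star
local infix:50 " ~ " => L.composable

lemma c_ss (s : S) : (s°) ~ s := (L.lr1 s).1
lemma m_ss (s : S) : (s°) ⬝ s = s := (L.lr1 s).2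

lemma star_sq (s : S) : (s°) ⬝ (s°) = s° := by
  have h := L.lr3 s s (c_ss L s)
  rw [m_ss L s] at h
  exact h.symm

lemma c_star_self (s : S) : (s°) ~ (s°) := by
  have h1 : (s°) ~ ((s°)°) := ((L.lr2 s (s°)).1).mpr (c_ss L (s°))
  have h2 := (L.lr2 s (s°)).2 h1
  have h3 : (s°) ⬝ ((s°)°) = s° := by rw [h2, m_ss L (s°)]
  have h4 := L.assoc₁ (s°) ((s°)°) (s°) h1 (c_ss L (s°))
  rw [h3] at h4
  exact h4.1

lemma st_st (s : S) : (s°)° = s° := by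
  have h1 : (s°) ~ ((s°)°) := ((L.lr2 s (s°)).1).mpr (c_ss L (s°))
  have h2 := (L.lr2 s (s°)).2 h1
  have h3 := L.lr3 s (s°) (c_star_self L s)
  rw [star_sq L s] at h3
  rw [h3, h2, m_ss L (s°)]

lemma c_of_c_star {s x : S} (h : s ~ (x°)) : s ~ x := by
  have h2 := (L.assoc₁ s (x°) x h (c_ss L x)).2.1
  rwa [m_ss L x] at h2

lemma c_star_right {s t : S} (h : s ~ t) : s ~ (t°) :=
  (L.assoc₃ s (t°) t (c_ss L t) (by rw [m_ss L t]; exact h)).1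

lemma c_stMul_left {s t : S} (h : s ~ t) : ((s ⬝ t)°) ~ s :=
  (L.assoc₃ ((s ⬝ t)°) s t h (c_ss L (s ⬝ t))).1

lemma c_st_mul {s t : S} (h : s ~ t) : (s°) ~ (s ⬝ t) :=
  (L.assoc₁ (s°) s t (c_ss L s) h).2.1

lemma st_mul_eq {s t : S} (h : s ~ t) : (s°) ⬝ (s ⬝ t) = s ⬝ t := by
  have h2 := (L.assoc₁ (s°) s t (c_ss L s) h).2.2
  rw [m_ss L s] at h2
  exact h2.symm

lemma stL_stMul {s t : S} (h : s ~ t) : (s°) ⬝ ((s ⬝ t)°) = (s ⬝ t)° := by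
  have h3 := L.lr3 s (s ⬝ t) (c_st_mul L h)
  rw [st_mul_eq L h] at h3
  exact h3.symm

lemma c_stMul_stL {s t : S} (h : s ~ t) : ((s ⬝ t)°) ~ (s°) := by
  have h2 : (s°) ~ ((s ⬝ t)°) := c_star_right L (c_st_mul L h)
  exact ((L.lr2 s (s ⬝ t)).1).mp h2

lemma stMul_stL {s t : S} (h : s ~ t) : ((s ⬝ t)°) ⬝ (s°) = (s ⬝ t)° := by
  have h2 : (s°) ~ ((s ⬝ t)°) := c_star_right L (c_st_mul L h)
  have h3 := (L.lr2 s (s ⬝ t)).2 h2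
  rw [← h3, stL_stMul L h]

lemma st_mul_star {s t : S} (h : s ~ t) : ((s ⬝ (t°))°) = (s ⬝ t)° := by
  rw [L.lr4 s t h]
  have h3 := L.lr3 (s ⬝ t) s (c_stMul_left L h)
  rw [h3, stMul_stL L h]

lemma star_act {a x : S} (hx : x° = a°) : (a°) ⬝ x = x := by
  rw [← hx, m_ss L x]

lemma key_left_c {a b x : S} (h : a ~ b) (hx : x° = a°) : ((a ⬝ b)°) ~ x :=
  c_of_c_star L (show ((a ⬝ b)°) ~ (x°) by rw [hx]; exact c_stMul_stL L h)

lemma key_left_st {a b x : S} (h : a ~ b) (hx : x° = a°) :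
    (((a ⬝ b)°) ⬝ x)° = (a ⬝ b)° := by
  rw [L.lr3 (a ⬝ b) x (key_left_c L h hx), hx, stMul_stL L h]

lemma key_left_idem {a b x : S} (h : a ~ b) (hx : x° = a°) :
    ((a ⬝ b)°) ⬝ (((a ⬝ b)°) ⬝ x) = ((a ⬝ b)°) ⬝ x := by
  have h2 := (L.assoc₁ ((a ⬝ b)°) ((a ⬝ b)°) x (c_star_self L (a ⬝ b))
    (key_left_c L h hx)).2.2
  rw [star_sq L (a ⬝ b)] at h2
  exact h2.symm

lemma key_right_c {a b y : S} (h : a ~ b) (hy : y° = b°) : a ~ y :=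
  c_of_c_star L (show a ~ (y°) by rw [hy]; exact c_star_right L h)

lemma key_right_st {a b y : S} (h : a ~ b) (hy : y° = b°) :
    ((a ⬝ y)°) = (a ⬝ b)° := by
  rw [← st_mul_star L (key_right_c L h hy), hy, st_mul_star L h]

lemma key_absorb {a b y : S} (h : a ~ b) (hy : y° = b°) :
    ((a ⬝ b)°) ⬝ (a ⬝ y) = a ⬝ y := by
  have h2 := m_ss L (a ⬝ y)
  rwa [key_right_st L h hy] at h2

lemma proj_swap_act {a b x : S} (h : (a°) ~ (b°)) (hx : x° = a°) :
    (((a°) ⬝ (b°))°) ⬝ x = (b°) ⬝ x := by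
  have hg : ((a°) ⬝ (b°))° = (b°) ⬝ (a°) := by
    rw [L.lr3 a (b°) h, st_st L b, (L.lr2 a b).2 h]
  rw [hg]
  have hba := (L.lr2 a b).1.mp h
  have hax : (a°) ~ x := c_of_c_star L (by rw [hx]; exact c_star_self L a)
  have h2 := (L.assoc₁ (b°) (a°) x hba hax).2.2
  rw [star_act L hx] at h2
  exact h2

variable [DecidableEq S]

lemma mem_star_eq {A B : Finset S} {a b : S} (hA : szCond L A a) (hB : szCond L B b)
    (h : a ~ b) : ∀ x ∈ szSet L A a B b, x° = (a ⬝ b)° := by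
  intro x hx
  unfold szSet at hx
  rcases Finset.mem_union.mp hx with hx | hx
  · obtain ⟨u, hu, rfl⟩ := Finset.mem_image.mp hx
    exact key_left_st L h (hA.2.2 u hu)
  · obtain ⟨u, hu, rfl⟩ := Finset.mem_image.mp hx
    exact key_right_st L h (hB.2.2 u hu)

lemma szCond_mul {A B : Finset S} {a b : S} (hA : szCond L A a) (hB : szCond L B b)
    (h : a ~ b) : szCond L (szSet L A a B b) (a ⬝ b) := by
  refine ⟨?_, ?_, mem_star_eq L hA hB h⟩
  · unfold szSet
    exact Finset.mem_union_right _ (Finset.mem_image.mpr ⟨b, hB.1, rfl⟩)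
  · unfold szSet
    refine Finset.mem_union_left _ (Finset.mem_image.mpr ⟨a°, hA.2.1, ?_⟩)
    exact stMul_stL L h

lemma szCond_star {A : Finset S} {a : S} (hA : szCond L A a) : szCond L A (a°) := by
  refine ⟨hA.2.1, ?_, ?_⟩
  · rw [st_st L a]; exact hA.2.1
  · intro x hx; rw [st_st L a]; exact hA.2.2 x hx

lemma szSet_assoc {A B C : Finset S} {a b c : S}
    (hA : szCond L A a) (hB : szCond L B b) (hC : szCond L C c)
    (hab : a ~ b) (hbc : b ~ c) :
    szSet L (szSet L A a B b) (a ⬝ b) C c = szSet L A a (szSet L B b C c) (b ⬝ c) := by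
  obtain ⟨h1, h2, h3⟩ := L.assoc₁ a b c hab hbc
  have hx1 : ∀ x ∈ A, (((a ⬝ b) ⬝ c)°) ⬝ (((a ⬝ b)°) ⬝ x) = ((a ⬝ (b ⬝ c))°) ⬝ x := by
    intro x hx
    rw [← h3]
    have hcx := key_left_c L hab (hA.2.2 x hx)
    have h4 := (L.assoc₁ (((a ⬝ b) ⬝ c)°) ((a ⬝ b)°) x (c_stMul_stL L h1) hcx).2.2
    rw [stMul_stL L h1] at h4
    exact h4.symm
  have hx2 : ∀ y ∈ B, (((a ⬝ b) ⬝ c)°) ⬝ (a ⬝ y) = a ⬝ (((b ⬝ c)°) ⬝ y) := by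
    intro y hy
    have hay := key_right_c L hab (hB.2.2 y hy)
    have hEa : (((a ⬝ b) ⬝ c)°) ~ a := by rw [h3]; exact c_stMul_left L h2
    have g1 := (L.assoc₁ _ a y hEa hay).2.2
    have haf : a ~ ((b ⬝ c)°) := c_star_right L h2
    have hfy : ((b ⬝ c)°) ~ y := key_left_c L hbc (hB.2.2 y hy)
    have g2 := (L.assoc₁ a _ y haf hfy).2.2
    have g3 : (((a ⬝ b) ⬝ c)°) ⬝ a = a ⬝ ((b ⬝ c)°) := by
      rw [h3]; exact (L.lr4 a (b ⬝ c) h2).symm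
    rw [← g1, g3, g2]
  have hx3 : ∀ z ∈ C, (a ⬝ b) ⬝ z = a ⬝ (b ⬝ z) := by
    intro z hz
    exact (L.assoc₁ a b z hab (key_right_c L hbc (hC.2.2 z hz))).2.2
  unfold szSet
  rw [Finset.image_union, Finset.image_union, Finset.image_image, Finset.image_image,
      Finset.image_image, Finset.image_image, Finset.union_assoc]
  congr 1
  · exact Finset.image_congr fun x hx => hx1 x (Finset.mem_coe.mp hx)
  congr 1
  · exact Finset.image_congr fun y hy => hx2 y (Finset.mem_coe.mp hy)
  · exact Finset.image_congr fun z hz => hx3 z (Finset.mem_coe.mp hz)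

lemma szSet_comm {A B : Finset S} {a b : S} (hA : szCond L A a) (hB : szCond L B b)
    (h : (a°) ~ (b°)) :
    szSet L A (a°) B (b°) = szSet L B (b°) A (a°) := by
  have hba : (b°) ~ (a°) := (L.lr2 a b).1.mp h
  unfold szSet
  rw [Finset.union_comm]
  congr 1
  · exact Finset.image_congr fun y hy =>
      (proj_swap_act L hba (hB.2.2 y (Finset.mem_coe.mp hy))).symm
  · exact Finset.image_congr fun x hx =>
      proj_swap_act L h (hA.2.2 x (Finset.mem_coe.mp hx))

lemma szSet_lr3 {A B : Finset S} {a b : S} (h : (a°) ~ b) :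
    szSet L A (a°) B b = szSet L A (a°) B (b°) := by
  have key : ((a°) ⬝ b)° = ((a°) ⬝ (b°))° := by
    rw [L.lr3 a b h, L.lr3 a (b°) (c_star_right L h), st_st L b]
  unfold szSet
  rw [key]

lemma szSet_lr1 {A : Finset S} {a : S} (hA : szCond L A a) :
    szSet L A (a°) A a = A := by
  have h1 : ((a°) ⬝ a)° = a° := by rw [m_ss L a]
  unfold szSet
  rw [h1, Finset.union_self]
  have h2 : A.image (fun x => (a°) ⬝ x) = A.image id :=
    Finset.image_congr fun x hx => star_act L (hA.2.2 x (Finset.mem_coe.mp hx))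
  rw [h2, Finset.image_id]

lemma szSet_lr4 {A B : Finset S} {a b : S} (hA : szCond L A a) (hB : szCond L B b)
    (h : a ~ b) :
    szSet L (szSet L A a B b) ((a ⬝ b)°) A a = szSet L A a B (b°) := by
  have he : (((a ⬝ b)°) ⬝ a)° = (a ⬝ b)° := by
    rw [L.lr3 (a ⬝ b) a (c_stMul_left L h), stMul_stL L h]
  have hrhs : (a ⬝ (b°))° = (a ⬝ b)° := st_mul_star L h
  unfold szSet
  rw [he, hrhs, Finset.image_union, Finset.image_image, Finset.image_image]
  have e1 : A.image ((fun x => ((a ⬝ b)°) ⬝ x) ∘ (fun x => ((a ⬝ b)°) ⬝ x))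
      = A.image (fun x => ((a ⬝ b)°) ⬝ x) :=
    Finset.image_congr fun x hx => key_left_idem L h (hA.2.2 x (Finset.mem_coe.mp hx))
  have e2 : B.image ((fun x => ((a ⬝ b)°) ⬝ x) ∘ (fun x => a ⬝ x))
      = B.image (fun x => a ⬝ x) :=
    Finset.image_congr fun y hy => key_absorb L h (hB.2.2 y (Finset.mem_coe.mp hy))
  rw [e1, e2, Finset.union_right_comm, Finset.union_self]

/-- The carrier of the Szendrei expansion. -/
abbrev SzE := {p : Finset S × S // szCond L p.1 p.2}

/-- The star of the Szendrei expansion. -/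
def szStar (p : SzE L) : SzE L := ⟨(p.1.1, (p.1.2)°), szCond_star L p.2⟩

/-- The partial multiplication of the Szendrei expansion (junk value off-domain). -/
noncomputable def szMul (p q : SzE L) : SzE L :=
  @dite _ (p.1.2 ~ q.1.2) (Classical.propDecidable _)
    (fun h => ⟨(szSet L p.1.1 p.1.2 q.1.1 q.1.2, p.1.2 ⬝ q.1.2), szCond_mul L p.2 q.2 h⟩)
    (fun _ => p)

lemma szMul_pos' (p q : SzE L) (h : p.1.2 ~ q.1.2) :
    (szMul L p q).1 = (szSet L p.1.1 p.1.2 q.1.1 q.1.2, p.1.2 ⬝ q.1.2) := by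
  unfold szMul
  rw [dif_pos h]

lemma szMul_assoc (p q r : SzE L) (h1 : p.1.2 ~ q.1.2) (h2 : q.1.2 ~ r.1.2) :
    szMul L (szMul L p q) r = szMul L p (szMul L q r) := by
  obtain ⟨g1, g2, g3⟩ := L.assoc₁ p.1.2 q.1.2 r.1.2 h1 h2
  have g1' : (szMul L p q).1.2 ~ r.1.2 := by
    rw [szMul_pos' L p q h1]; exact g1
  have g2' : p.1.2 ~ (szMul L q r).1.2 := by
    rw [szMul_pos' L q r h2]; exact g2
  apply Subtype.ext
  rw [szMul_pos' L (szMul L p q) r g1', szMul_pos' L p (szMul L q r) g2',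
      szMul_pos' L p q h1, szMul_pos' L q r h2]
  exact Prod.ext (szSet_assoc L p.2 q.2 r.2 h1 h2) g3

lemma szAssoc₁ (p q r : SzE L) (h1 : p.1.2 ~ q.1.2) (h2 : q.1.2 ~ r.1.2) :
    ((szMul L p q).1.2 ~ r.1.2) ∧ (p.1.2 ~ (szMul L q r).1.2) ∧
      szMul L (szMul L p q) r = szMul L p (szMul L q r) := by
  obtain ⟨g1, g2, -⟩ := L.assoc₁ p.1.2 q.1.2 r.1.2 h1 h2
  exact ⟨by rw [szMul_pos' L p q h1]; exact g1,
    by rw [szMul_pos' L q r h2]; exact g2, szMul_assoc L p q r h1 h2⟩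

lemma szAssoc₂ (p q r : SzE L) (h1 : p.1.2 ~ q.1.2) (h2 : (szMul L p q).1.2 ~ r.1.2) :
    (q.1.2 ~ r.1.2) ∧ (p.1.2 ~ (szMul L q r).1.2) ∧
      szMul L (szMul L p q) r = szMul L p (szMul L q r) := by
  have h2' : (p.1.2 ⬝ q.1.2) ~ r.1.2 := by
    rw [szMul_pos' L p q h1] at h2; exact h2
  obtain ⟨g1, g2, -⟩ := L.assoc₂ p.1.2 q.1.2 r.1.2 h1 h2'
  exact ⟨g1, by rw [szMul_pos' L q r g1]; exact g2, szMul_assoc L p q r h1 g1⟩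

lemma szAssoc₃ (p q r : SzE L) (h1 : q.1.2 ~ r.1.2) (h2 : p.1.2 ~ (szMul L q r).1.2) :
    (p.1.2 ~ q.1.2) ∧ ((szMul L p q).1.2 ~ r.1.2) ∧
      szMul L (szMul L p q) r = szMul L p (szMul L q r) := by
  have h2' : p.1.2 ~ (q.1.2 ⬝ r.1.2) := by
    rw [szMul_pos' L q r h1] at h2; exact h2
  obtain ⟨g1, g2, -⟩ := L.assoc₃ p.1.2 q.1.2 r.1.2 h1 h2'
  exact ⟨g1, by rw [szMul_pos' L p q g1]; exact g2, szMul_assoc L p q r g1 h1⟩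

lemma szLr1 (p : SzE L) : ((szStar L p).1.2 ~ p.1.2) ∧ szMul L (szStar L p) p = p := by
  have h : (szStar L p).1.2 ~ p.1.2 := c_ss L p.1.2
  refine ⟨h, ?_⟩
  apply Subtype.ext
  rw [szMul_pos' L (szStar L p) p h]
  exact Prod.ext (szSet_lr1 L p.2) (m_ss L p.1.2)

lemma szLr2 (p q : SzE L) :
    (((szStar L p).1.2 ~ (szStar L q).1.2) ↔ ((szStar L q).1.2 ~ (szStar L p).1.2)) ∧
    (((szStar L p).1.2 ~ (szStar L q).1.2) →
      szMul L (szStar L p) (szStar L q) = szMul L (szStar L q) (szStar L p)) := by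
  refine ⟨(L.lr2 p.1.2 q.1.2).1, fun h => ?_⟩
  have h' : (p.1.2°) ~ (q.1.2°) := h
  apply Subtype.ext
  rw [szMul_pos' L (szStar L p) (szStar L q) h,
      szMul_pos' L (szStar L q) (szStar L p) ((L.lr2 p.1.2 q.1.2).1.mp h')]
  exact Prod.ext (szSet_comm L p.2 q.2 h') ((L.lr2 p.1.2 q.1.2).2 h')

lemma szLr3 (p q : SzE L) (h : (szStar L p).1.2 ~ q.1.2) :
    szStar L (szMul L (szStar L p) q) = szMul L (szStar L p) (szStar L q) := by
  have h' : (p.1.2°) ~ q.1.2 := h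
  have h2 : (p.1.2°) ~ (q.1.2°) := c_star_right L h'
  apply Subtype.ext
  show ((szMul L (szStar L p) q).1.1, ((szMul L (szStar L p) q).1.2)°)
      = (szMul L (szStar L p) (szStar L q)).1
  rw [szMul_pos' L (szStar L p) q h, szMul_pos' L (szStar L p) (szStar L q) h2]
  exact Prod.ext (szSet_lr3 L h') (L.lr3 p.1.2 q.1.2 h')

lemma szLr4 (p q : SzE L) (h : p.1.2 ~ q.1.2) :
    szMul L p (szStar L q) = szMul L (szStar L (szMul L p q)) p := by
  have h1 : p.1.2 ~ ((szStar L q).1.2) := c_star_right L h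
  have h2' : ((szStar L (szMul L p q)).1.2) ~ p.1.2 := by
    show ((szMul L p q).1.2)° ~ p.1.2
    rw [szMul_pos' L p q h]
    exact c_stMul_left L h
  apply Subtype.ext
  rw [szMul_pos' L p (szStar L q) h1,
      szMul_pos' L (szStar L (szMul L p q)) p h2']
  show (szSet L p.1.1 p.1.2 q.1.1 (q.1.2°), p.1.2 ⬝ (q.1.2°))
      = (szSet L ((szMul L p q).1.1) (((szMul L p q).1.2)°) p.1.1 p.1.2,
        (((szMul L p q).1.2)°) ⬝ p.1.2)
  rw [szMul_pos' L p q h]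
  exact Prod.ext (szSet_lr4 L p.2 q.2 h).symm (L.lr4 p.1.2 q.1.2 h)

/-- The Szendrei expansion as a left restriction semigroupoid. -/
noncomputable def szLR : LRSgpd (SzE L) where
  composable p q := p.1.2 ~ q.1.2
  mul := szMul L
  star := szStar L
  assoc₁ := szAssoc₁ L
  assoc₂ := szAssoc₂ L
  assoc₃ := szAssoc₃ L
  lr1 := szLr1 L
  lr2 := szLr2 L
  lr3 := szLr3 L
  lr4 := szLr4 L

end Szendrei

theorem stmt17 {S : Type*} [DecidableEq S] (L : LRSgpd S) :
    ∃ LZ : LRSgpd {p : Finset S × S // szCond L p.1 p.2},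
      (∀ p q, LZ.composable p q ↔ L.composable p.1.2 q.1.2) ∧
      (∀ p q, LZ.composable p q →
        (LZ.mul p q).1 = (szSet L p.1.1 p.1.2 q.1.1 q.1.2, L.mul p.1.2 q.1.2)) ∧
      (∀ p, (LZ.star p).1 = (p.1.1, L.star p.1.2)) := by
  refine ⟨szLR L, fun p q => Iff.rfl, fun p q h => ?_, fun p => rfl⟩
  exact szMul_pos' L p q h
end

section
/- Let S be a left restriction semigroupoid and Sz(S) its Szendrei expansion with natural partial order ⪯. For (A,a), (B,b) ∈ Sz(S): (A,a) ⪯ (B,b) if and only if a ⪯ b in S and a*B ⊆ A. -/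
/-- The natural partial order: `s ⪯ t` iff `(s*, t)` is composable and `s* t = s`. -/
def natle {S : Type*} (L : LRSgpd S) (s t : S) : Prop :=
  L.composable (L.star s) t ∧ L.mul (L.star s) t = s

theorem stmt18 {S : Type*} [DecidableEq S] (L : LRSgpd S)
    (A : Finset S) (a : S) (B : Finset S) (b : S)
    (hA : szCond L A a) (hB : szCond L B b) :
    -- (A,a) ⪯ (B,b), i.e. (A,a)* (B,b) is defined and equals (A,a)
    (L.composable (L.star a) b ∧ szSet L A (L.star a) B b = A ∧
      L.mul (L.star a) b = a)
    ↔
    (natle L a b ∧ B.image (fun x => L.mul (L.star a) x) ⊆ A) := by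
  constructor
  · rintro ⟨hc, hset, hmul⟩
    refine ⟨⟨hc, hmul⟩, ?_⟩
    rw [← hset]
    unfold szSet
    exact Finset.subset_union_right
  · rintro ⟨⟨hc, hmul⟩, hsub⟩
    refine ⟨hc, ?_, hmul⟩
    unfold szSet
    rw [hmul]
    have him : A.image (fun x => L.mul (L.star a) x) = A := by
      apply Finset.image_congr (g := id) ?_ |>.trans Finset.image_id
      intro x hx
      simp only [id]
      rw [← hA.2.2 x hx]
      exact (L.lr1 x).2
    rw [him]
    exact Finset.union_eq_left.mpr hsub
end

section
/- Let S and T be left restriction semigroupoids and φ: S → T a premorphism. Then there is a unique restriction morphism φ̄: Sz(S) → T with φ = φ̄ ∘ ι, where ι(s) = ({s*, s}, s); explicitly φ̄({s*, s₁, …, sₙ = s}, s) = φ(s₁)* φ(s₂)* ⋯ φ(sₙ)* φ(s). Conversely, for any restriction morphism φ̄: Sz(S) → T, the composite φ̄ ∘ ι is a premorphism. -/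
/-- A premorphism of left restriction semigroupoids. -/
def IsPremorphism {S T : Type*} (LS : LRSgpd S) (LT : LRSgpd T) (φ : S → T) : Prop :=
  (∀ s t, LS.composable s t →
    LT.composable (φ s) (φ t) ∧ LT.composable (LT.star (φ s)) (φ (LS.mul s t)) ∧
    LT.mul (φ s) (φ t) = LT.mul (LT.star (φ s)) (φ (LS.mul s t))) ∧
  (∀ s, natle LT (LT.star (φ s)) (φ (LS.star s)))

/-- A restriction morphism of left restriction semigroupoids. -/
def IsRestrMorphism {S T : Type*} (LS : LRSgpd S) (LT : LRSgpd T) (f : S → T) : Prop :=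
  (∀ s t, LS.composable s t →
    LT.composable (f s) (f t) ∧ f (LS.mul s t) = LT.mul (f s) (f t)) ∧
  (∀ s, f (LS.star s) = LT.star (f s))

namespace Sz
variable {X : Type*}

def Idp (L : LRSgpd X) (x : X) : Prop := L.star x = x
def Und (L : LRSgpd X) (f x : X) : Prop := Idp L x ∧ L.composable x f ∧ L.mul x f = x
def LAbs (L : LRSgpd X) (f c : X) : Prop := L.composable f c ∧ L.mul f c = c
def prodl (L : LRSgpd X) (xs : List X) (c : X) : X := xs.foldr L.mul c

variable (L : LRSgpd X)

@[simp] lemma prodl_nil (c : X) : prodl L [] c = c := rfl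
@[simp] lemma prodl_cons (x : X) (xs : List X) (c : X) :
    prodl L (x :: xs) c = L.mul x (prodl L xs c) := rfl
lemma prodl_append (xs ys : List X) (c : X) :
    prodl L (xs ++ ys) c = prodl L xs (prodl L ys c) := List.foldr_append ..

lemma g_comp_ss (s : X) : L.composable (L.star s) (L.star s) := by
  obtain ⟨h1, h2⟩ := L.lr1 s
  have h3 : L.composable (L.star s) (L.mul (L.star s) s) := by rw [h2]; exact h1
  exact (L.assoc₃ (L.star s) (L.star s) s h1 h3).1

lemma g_star_mul_self (s : X) : L.mul (L.star s) (L.star s) = L.star s := by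
  have h := L.lr3 s s (L.lr1 s).1
  rw [(L.lr1 s).2] at h
  exact h.symm

lemma g_star_star (s : X) : L.star (L.star s) = L.star s := by
  have h1 : L.composable (L.star (L.star s)) (L.star s) := (L.lr1 (L.star s)).1
  have h2 : L.composable (L.star s) (L.star (L.star s)) := (L.lr2 s (L.star s)).1.mpr h1
  have h3 : L.mul (L.star s) (L.star (L.star s)) = L.mul (L.star (L.star s)) (L.star s) :=
    (L.lr2 s (L.star s)).2 h2
  have h4 := L.lr3 s (L.star s) (g_comp_ss L s)
  rw [g_star_mul_self] at h4
  rw [h4, h3, (L.lr1 (L.star s)).2]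

lemma g_idp_star (s : X) : Idp L (L.star s) := g_star_star L s

lemma g_idp_comp_self {x : X} (hx : Idp L x) : L.composable x x := by
  have := g_comp_ss L x; rwa [hx] at this

lemma g_idp_mul_self {x : X} (hx : Idp L x) : L.mul x x = x := by
  have := g_star_mul_self L x; rwa [hx] at this

lemma g_comm {x y : X} (hx : Idp L x) (hy : Idp L y) (h : L.composable x y) :
    L.composable y x ∧ L.mul x y = L.mul y x := by
  have h1 := (L.lr2 x y).1
  have h2 := (L.lr2 x y).2
  rw [hx, hy] at h1 h2
  exact ⟨h1.mp h, h2 h⟩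

lemma g_idp_mul {x y : X} (hx : Idp L x) (hy : Idp L y) (h : L.composable x y) :
    Idp L (L.mul x y) := by
  have h' : L.composable (L.star x) y := by rwa [hx]
  have := L.lr3 x y h'
  rw [hx, hy] at this
  exact this

lemma g_lr3' {x y : X} (hx : Idp L x) (h : L.composable x y) :
    L.star (L.mul x y) = L.mul x (L.star y) := by
  have h' : L.composable (L.star x) y := by rwa [hx]
  have := L.lr3 x y h'
  rwa [hx] at this

lemma g_s1 {s t : X} (h : L.composable s t) :
    L.composable s (L.star t) ∧ L.mul s (L.star t) = L.mul (L.star (L.mul s t)) s := by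
  have h1 : L.composable s (L.mul (L.star t) t) := by rw [(L.lr1 t).2]; exact h
  exact ⟨(L.assoc₃ s (L.star t) t (L.lr1 t).1 h1).1, L.lr4 s t h⟩

lemma g_s3 {s t : X} (h : L.composable s t) : L.composable (L.star (L.mul s t)) s := by
  have h1 : L.composable (L.star (L.mul s t)) (L.mul s t) := (L.lr1 _).1
  exact (L.assoc₃ (L.star (L.mul s t)) s t h h1).1

lemma g_s4 {s t : X} (h : L.composable s t) :
    L.composable (L.star (L.mul s t)) (L.star s) := by
  have h1 : L.composable (L.star (L.mul s t)) (L.mul (L.star s) s) := by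
    rw [(L.lr1 s).2]; exact g_s3 L h
  exact (L.assoc₃ (L.star (L.mul s t)) (L.star s) s (L.lr1 s).1 h1).1

lemma g_s2 {a b y : X} (h : L.composable a b) (hy : L.star y = L.star b) :
    L.composable a y := by
  have h1 : L.composable (L.star b) y := by rw [← hy]; exact (L.lr1 y).1
  have h2 : L.mul (L.star b) y = y := by rw [← hy]; exact (L.lr1 y).2
  have h3 := (L.assoc₁ a (L.star b) y (g_s1 L h).1 h1).2.1
  rwa [h2] at h3

lemma g_s5 {s t : X} (h : L.composable s t) :
    L.composable (L.star s) (L.mul s t) ∧ L.mul (L.star s) (L.mul s t) = L.mul s t := by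
  have h1 : L.composable (L.mul (L.star s) s) t := by rw [(L.lr1 s).2]; exact h
  obtain ⟨-, h2, h3⟩ := L.assoc₂ (L.star s) s t (L.lr1 s).1 h1
  rw [(L.lr1 s).2] at h3
  exact ⟨h2, h3.symm⟩

/-- `(st)* s* = (st)*`. -/
lemma g_c1 {s t : X} (h : L.composable s t) :
    L.mul (L.star (L.mul s t)) (L.star s) = L.star (L.mul s t) := by
  have hcus : L.composable (L.star (L.mul s t)) (L.star s) := g_s4 L h
  have hidp_e : Idp L (L.mul (L.star (L.mul s t)) (L.star s)) :=
    g_idp_mul L (g_idp_star L _) (g_idp_star L _) hcus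
  have h5 := g_s5 L h
  have hassoc := L.assoc₁ (L.star (L.mul s t)) (L.star s) (L.mul s t) hcus h5.1
  have hest : L.mul (L.mul (L.star (L.mul s t)) (L.star s)) (L.mul s t) = L.mul s t := by
    rw [hassoc.2.2, h5.2, (L.lr1 (L.mul s t)).2]
  have hcu : L.composable (L.star (L.mul s t)) (L.mul s t) := (L.lr1 _).1
  have h6 : L.composable (L.mul (L.star (L.mul s t)) (L.star s))
      (L.mul (L.star (L.mul s t)) (L.mul s t)) := by
    rw [(L.lr1 (L.mul s t)).2]; exact hassoc.1
  have hceu := (L.assoc₃ (L.mul (L.star (L.mul s t)) (L.star s))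
      (L.star (L.mul s t)) (L.mul s t) hcu h6).1
  have hcest := hassoc.1
  have h7 : L.star (L.mul s t) =
      L.mul (L.mul (L.star (L.mul s t)) (L.star s)) (L.star (L.mul s t)) := by
    have h7' := g_lr3' L hidp_e hcest
    rw [hest] at h7'
    exact h7'
  have hcomm := g_comm L hidp_e (g_idp_star L _) hceu
  have h8 : L.mul (L.star (L.mul s t)) (L.mul (L.star (L.mul s t)) (L.star s)) =
      L.mul (L.star (L.mul s t)) (L.star s) := by
    have ha := L.assoc₁ (L.star (L.mul s t)) (L.star (L.mul s t)) (L.star s)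
      (g_idp_comp_self L (g_idp_star L _)) hcus
    rw [← ha.2.2, g_idp_mul_self L (g_idp_star L _)]
  exact ((h7.trans hcomm.2).trans h8).symm


section Machinery
variable {f c d x y g : X}

lemma u_left (hf : Idp L f) (hx : Und L f x) : L.composable f x ∧ L.mul f x = x := by
  obtain ⟨hix, hcx, hmx⟩ := hx
  obtain ⟨h1, h2⟩ := g_comm L hix hf hcx
  exact ⟨h1, by rw [← h2, hmx]⟩

lemma u_f (hf : Idp L f) : Und L f f :=
  ⟨hf, g_idp_comp_self L hf, g_idp_mul_self L hf⟩

lemma u_comp (hf : Idp L f) (hx : Und L f x) (hy : Und L f y) :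
    L.composable x y ∧ L.mul x y = L.mul y x ∧ Und L f (L.mul x y) := by
  have hfy := u_left L hf hy
  have hcxy : L.composable x y := by
    have := (L.assoc₁ x f y hx.2.1 hfy.1).1
    rwa [hx.2.2] at this
  have hcomm := g_comm L hx.1 hy.1 hcxy
  have hcf : L.composable (L.mul x y) f := (L.assoc₁ x y f hcxy hy.2.1).1
  have hmf : L.mul (L.mul x y) f = L.mul x y := by
    rw [(L.assoc₁ x y f hcxy hy.2.1).2.2, hy.2.2]
  exact ⟨hcxy, hcomm.2, g_idp_mul L hx.1 hy.1 hcxy, hcf, hmf⟩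

lemma labs_mul (hf : Idp L f) (hx : Und L f x) (hcc : LAbs L f c) :
    L.composable x c ∧ LAbs L f (L.mul x c) := by
  have hxc : L.composable x c := by
    have := (L.assoc₁ x f c hx.2.1 hcc.1).1
    rwa [hx.2.2] at this
  have hfx := u_left L hf hx
  have ha := L.assoc₁ f x c hfx.1 hxc
  refine ⟨hxc, ha.2.1, ?_⟩
  rw [← ha.2.2, hfx.2]

lemma u_swap (hf : Idp L f) (hx : Und L f x) (hy : Und L f y) (hcc : LAbs L f c) :
    L.mul x (L.mul y c) = L.mul y (L.mul x c) := by
  have hyc := (labs_mul L hf hy hcc).1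
  have hxc := (labs_mul L hf hx hcc).1
  have hxy := u_comp L hf hx hy
  have hyx := u_comp L hf hy hx
  rw [← (L.assoc₁ x y c hxy.1 hyc).2.2, ← (L.assoc₁ y x c hyx.1 hxc).2.2, hxy.2.1]

def AllUnd (f : X) (xs : List X) : Prop := ∀ x ∈ xs, Und L f x

lemma p_labs (hf : Idp L f) {xs : List X} (hxs : AllUnd L f xs) (hcc : LAbs L f c) :
    LAbs L f (prodl L xs c) := by
  induction xs with
  | nil => exact hcc
  | cons x xs ih =>
    exact (labs_mul L hf (hxs x (by simp)) (ih (fun z hz => hxs z (by simp [hz])))).2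

lemma p_comp_head (hf : Idp L f) {xs : List X} (hxs : AllUnd L f xs) (hcc : LAbs L f c)
    (hx : Und L f x) : L.composable x (prodl L xs c) :=
  (labs_mul L hf hx (p_labs L hf hxs hcc)).1

lemma p_perm (hf : Idp L f) {xs ys : List X} (hp : xs.Perm ys)
    (hxs : AllUnd L f xs) (hcc : LAbs L f c) : prodl L xs c = prodl L ys c := by
  induction hp with
  | nil => rfl
  | cons z _ ih =>
    simp only [prodl_cons]
    rw [ih (fun w hw => hxs w (by simp [hw]))]
  | swap a b l =>
    simp only [prodl_cons]
    exact u_swap L hf (hxs b (by simp)) (hxs a (by simp))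
      (p_labs L hf (fun w hw => hxs w (by simp [hw])) hcc)
  | trans h1 _ ih1 ih2 =>
    rw [ih1 hxs, ih2 (fun w hw => hxs w (h1.mem_iff.mpr hw))]

lemma p_absorb (hf : Idp L f) {xs : List X} (hxs : AllUnd L f xs) (hcc : LAbs L f c)
    (hx : x ∈ xs) : L.mul x (prodl L xs c) = prodl L xs c := by
  classical
  have hperm := List.perm_cons_erase hx
  rw [p_perm L hf hperm hxs hcc]
  simp only [prodl_cons]
  have hux := hxs x hx
  have herase : AllUnd L f (xs.erase x) :=
    fun w hw => hxs w (hperm.mem_iff.mpr (List.mem_cons_of_mem x hw))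
  have hQ := p_labs L hf herase hcc
  have hxQ := (labs_mul L hf hux hQ).1
  rw [← (L.assoc₁ x x (prodl L (xs.erase x) c) (g_idp_comp_self L hux.1) hxQ).2.2,
    g_idp_mul_self L hux.1]

lemma p_dedup [DecidableEq X] (hf : Idp L f) {xs : List X} (hxs : AllUnd L f xs)
    (hcc : LAbs L f c) : prodl L xs c = prodl L xs.dedup c := by
  induction xs with
  | nil => rfl
  | cons x xs ih =>
    have hxs' : AllUnd L f xs := fun w hw => hxs w (by simp [hw])
    have hdd : AllUnd L f xs.dedup := fun w hw => hxs' w (List.mem_dedup.mp hw)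
    by_cases hm : x ∈ xs
    · rw [List.dedup_cons_of_mem hm, prodl_cons, ih hxs']
      exact p_absorb L hf hdd hcc (List.mem_dedup.mpr hm)
    · rw [List.dedup_cons_of_notMem hm, prodl_cons, prodl_cons, ih hxs']

lemma p_setcongr [DecidableEq X] (hf : Idp L f) {xs ys : List X}
    (hxy : ∀ z, z ∈ xs ↔ z ∈ ys) (hxs : AllUnd L f xs) (hcc : LAbs L f c) :
    prodl L xs c = prodl L ys c := by
  have hys : AllUnd L f ys := fun w hw => hxs w ((hxy w).mpr hw)
  have hperm : xs.dedup.Perm ys.dedup := by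
    rw [List.perm_ext_iff_of_nodup (List.nodup_dedup xs) (List.nodup_dedup ys)]
    intro z
    rw [List.mem_dedup, List.mem_dedup]
    exact hxy z
  rw [p_dedup L hf hxs hcc, p_dedup L hf hys hcc,
    p_perm L hf hperm (fun w hw => hxs w (List.mem_dedup.mp hw)) hcc]

lemma p_mul_through (hf : Idp L f) (hg : Und L f g) {xs : List X} (hxs : AllUnd L f xs)
    (hcc : LAbs L f c) (hgc : L.composable g c ∧ L.mul g c = c) :
    L.mul g (prodl L xs c) = prodl L xs c := by
  induction xs with
  | nil => exact hgc.2
  | cons x xs ih =>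
    have hxs' : AllUnd L f xs := fun w hw => hxs w (by simp [hw])
    have hx := hxs x (by simp)
    have hQ := p_labs L hf hxs' hcc
    have hxQ := (labs_mul L hf hx hQ).1
    have hgx := u_comp L hf hg hx
    simp only [prodl_cons]
    rw [← (L.assoc₁ g x (prodl L xs c) hgx.1 hxQ).2.2, hgx.2.1,
      (L.assoc₁ x g (prodl L xs c) (u_comp L hf hx hg).1
        (labs_mul L hf hg hQ).1).2.2, ih hxs']

lemma p_mulr (hf : Idp L f) {xs : List X} (hxs : AllUnd L f xs) (hcc : LAbs L f c)
    (hd : L.composable c d) :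
    L.composable (prodl L xs c) d ∧ L.mul (prodl L xs c) d = prodl L xs (L.mul c d) := by
  induction xs with
  | nil => exact ⟨hd, rfl⟩
  | cons x xs ih =>
    have hxs' : AllUnd L f xs := fun w hw => hxs w (by simp [hw])
    obtain ⟨ih1, ih2⟩ := ih hxs'
    have hx := hxs x (by simp)
    have hxQ := (labs_mul L hf hx (p_labs L hf hxs' hcc)).1
    have ha := L.assoc₁ x (prodl L xs c) d hxQ ih1
    simp only [prodl_cons]
    exact ⟨ha.1, by rw [ha.2.2, ih2]⟩

lemma p_star (hf : Idp L f) {xs : List X} (hxs : AllUnd L f xs) (hcc : LAbs L f c) :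
    L.star (prodl L xs c) = prodl L xs (L.star c) := by
  induction xs with
  | nil => rfl
  | cons x xs ih =>
    have hxs' : AllUnd L f xs := fun w hw => hxs w (by simp [hw])
    have hx := hxs x (by simp)
    have hxQ := (labs_mul L hf hx (p_labs L hf hxs' hcc)).1
    simp only [prodl_cons]
    rw [g_lr3' L hx.1 hxQ, ih hxs']

lemma p_replace (hf : Idp L f) (he : Und L f g) {x x' : X} (hx : Und L f x)
    (hx' : Und L f x') (hee : L.mul x g = L.mul x' g) {P : X}
    (hP : L.composable g P ∧ L.mul g P = P)
    (hxP : L.composable x P) (hx'P : L.composable x' P) :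
    L.mul x P = L.mul x' P := by
  have h1 := L.assoc₁ x g P (u_comp L hf hx he).1 hP.1
  have h2 := L.assoc₁ x' g P (u_comp L hf hx' he).1 hP.1
  rw [← hP.2]
  rw [← h1.2.2, ← h2.2.2, hee]

lemma u_down {f' : X} (hf : Idp L f) (hf' : Und L f f') {x : X} (hx : Und L f' x) :
    Und L f x := by
  refine ⟨hx.1, ?_, ?_⟩
  · have := (L.assoc₁ x f' f hx.2.1 hf'.2.1).1
    rwa [hx.2.2] at this
  · have := (L.assoc₁ x f' f hx.2.1 hf'.2.1).2.2
    rw [hx.2.2, hf'.2.2, hx.2.2] at this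
    exact this

lemma labs_down {f' : X} (hf : Idp L f) (hf' : Und L f f') (hcc : LAbs L f' c) :
    LAbs L f c := by
  have hff' := u_left L hf hf'
  have ha := L.assoc₁ f f' c hff'.1 hcc.1
  constructor
  · have := ha.2.1; rwa [hcc.2] at this
  · have := ha.2.2
    rw [hff'.2, hcc.2] at this
    exact this.symm

lemma p_split {α : Type*} (hf : Idp L f) (u v : α → X) (l : List α)
    (hcuv : ∀ z ∈ l, L.composable (u z) (v z))
    (hu : ∀ z ∈ l, Und L f (u z)) (hv : ∀ z ∈ l, Und L f (v z)) (hcc : LAbs L f c) :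
    prodl L (l.map (fun z => L.mul (u z) (v z))) c =
      prodl L (l.flatMap (fun z => [u z, v z])) c := by
  induction l with
  | nil => rfl
  | cons z l ih =>
    have hAll : AllUnd L f (l.flatMap (fun z => [u z, v z])) := by
      intro x hx
      obtain ⟨w, hw, hx⟩ := List.mem_flatMap.mp hx
      have hx' : x = u w ∨ x = v w := by simpa using hx
      rcases hx' with rfl | rfl
      · exact hu w (by simp [hw])
      · exact hv w (by simp [hw])
    have ihe := ih (fun w hw => hcuv w (by simp [hw])) (fun w hw => hu w (by simp [hw]))
      (fun w hw => hv w (by simp [hw]))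
    have hvP := p_comp_head L hf hAll hcc (hv z (by simp))
    have ha := L.assoc₁ (u z) (v z) _ (hcuv z (by simp)) hvP
    simp only [List.map_cons, List.flatMap_cons, prodl_cons, List.cons_append,
      List.nil_append, prodl_append]
    rw [ihe]
    exact ha.2.2

lemma p_bridge {α : Type*} (hf : Idp L f) (hgE : Und L f g)
    (u v : α → X) {base : X}
    (hbase : LAbs L f base) (hEbase : L.composable g base ∧ L.mul g base = base)
    (l : List α) (hu : ∀ y ∈ l, Und L f (u y)) (hv : ∀ y ∈ l, Und L f (v y))
    (hkey : ∀ y ∈ l, L.mul (u y) g = L.mul (v y) g)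
    (m : List X) (hm : AllUnd L f m) :
    prodl L (l.map u ++ m) base = prodl L (l.map v ++ m) base := by
  induction l with
  | nil => rfl
  | cons y l ih =>
    have hAll : AllUnd L f (l.map u ++ m) := by
      intro x hx
      rcases List.mem_append.mp hx with h | h
      · obtain ⟨w, hw, rfl⟩ := List.mem_map.mp h
        exact hu w (by simp [hw])
      · exact hm x h
    have hPl := p_labs L hf hAll hbase
    have hEP : L.composable g (prodl L (l.map u ++ m) base) ∧
        L.mul g (prodl L (l.map u ++ m) base) = prodl L (l.map u ++ m) base :=
      ⟨(labs_mul L hf hgE hPl).1, p_mul_through L hf hgE hAll hbase hEbase⟩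
    have hxP := (labs_mul L hf (hu y (by simp)) hPl).1
    have hx'P := (labs_mul L hf (hv y (by simp)) hPl).1
    have hrep := p_replace L hf hgE (hu y (by simp)) (hv y (by simp))
      (hkey y (by simp)) hEP hxP hx'P
    have ihe := ih (fun w hw => hu w (by simp [hw])) (fun w hw => hv w (by simp [hw]))
      (fun w hw => hkey w (by simp [hw]))
    simp only [List.map_cons, List.cons_append, prodl_cons]
    rw [hrep, ihe]

end Machinery

section Premorphism
variable {S T : Type*} (LS : LRSgpd S) (LT : LRSgpd T) (φ : S → T)
variable (hφ : IsPremorphism LS LT φ)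

include hφ

lemma q_idp_E (s : S) : Idp LT (φ (LS.star s)) := by
  obtain ⟨h1, h2⟩ := hφ.2 (LS.star s)
  rw [g_star_star LS, g_star_star LT] at h2
  rw [(LT.lr1 (φ (LS.star s))).2] at h2
  exact h2.symm

lemma q_und (s : S) : Und LT (φ (LS.star s)) (LT.star (φ s)) := by
  have h := hφ.2 s
  rw [natle, g_star_star LT] at h
  exact ⟨g_idp_star LT _, h.1, h.2⟩

lemma q_und' {s a : S} (hs : LS.star s = LS.star a) :
    Und LT (φ (LS.star a)) (LT.star (φ s)) := by
  have := q_und LS LT φ hφ s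
  rwa [hs] at this

lemma q_labs (s : S) : LAbs LT (φ (LS.star s)) (φ s) := by
  have hu := q_und LS LT φ hφ s
  have hE := q_idp_E LS LT φ hφ s
  have hfx := u_left LT hE hu
  have h1 := LT.lr1 (φ s)
  have ha := LT.assoc₁ _ _ _ hfx.1 h1.1
  constructor
  · have := ha.2.1; rwa [h1.2] at this
  · have := ha.2.2
    rw [hfx.2, h1.2] at this
    exact this.symm

lemma mov {a b : S} (hab : LS.composable a b) :
    ∀ (l : List S), (∀ z ∈ l, LS.star z = LS.star b) →
    LT.composable (φ a) (prodl LT (l.map (fun z => LT.star (φ z))) (φ b)) ∧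
    LT.mul (φ a) (prodl LT (l.map (fun z => LT.star (φ z))) (φ b)) =
      prodl LT (l.map (fun z => LT.mul (LT.star (φ a)) (LT.star (φ (LS.mul a z)))))
        (LT.mul (LT.star (φ a)) (φ (LS.mul a b))) := by
  intro l hl
  induction l with
  | nil =>
    have h := hφ.1 a b hab
    exact ⟨h.1, h.2.2⟩
  | cons z l ih =>
    have hz : LS.star z = LS.star b := hl z (by simp)
    obtain ⟨hQ1, hQ2⟩ := ih (fun w hw => hl w (by simp [hw]))
    have haz : LS.composable a z := g_s2 LS hab hz
    have hpz := hφ.1 a z haz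
    have hsz := g_s1 LT hpz.1
    have hEb := q_idp_E LS LT φ hφ b
    have hAll : AllUnd LT (φ (LS.star b)) (l.map (fun z => LT.star (φ z))) := by
      intro w hw
      obtain ⟨w', hw', rfl⟩ := List.mem_map.mp hw
      exact q_und' LS LT φ hφ (hl w' (by simp [hw']))
    have hxzQ : LT.composable (LT.star (φ z))
        (prodl LT (l.map (fun z => LT.star (φ z))) (φ b)) :=
      p_comp_head LT hEb hAll (q_labs LS LT φ hφ b) (q_und' LS LT φ hφ hz)
    have ha1 := LT.assoc₁ (φ a) (LT.star (φ z)) _ hsz.1 hxzQ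
    refine ⟨ha1.2.1, ?_⟩
    have h2 : LT.mul (φ a) (prodl LT ((z :: l).map (fun z => LT.star (φ z))) (φ b)) =
        LT.mul (LT.mul (φ a) (LT.star (φ z)))
          (prodl LT (l.map (fun z => LT.star (φ z))) (φ b)) := by
      simp only [List.map_cons, prodl_cons]
      exact ha1.2.2.symm
    rw [h2, hsz.2]
    have hc3 : LT.composable (LT.star (LT.mul (φ a) (φ z))) (φ a) := g_s3 LT hpz.1
    have ha2 := LT.assoc₁ (LT.star (LT.mul (φ a) (φ z))) (φ a) _ hc3 hQ1
    rw [ha2.2.2, hQ2]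
    have hstar : LT.star (LT.mul (φ a) (φ z)) =
        LT.mul (LT.star (φ a)) (LT.star (φ (LS.mul a z))) := by
      rw [hpz.2.2]
      exact g_lr3' LT (g_idp_star LT _) hpz.2.1
    rw [hstar]
    simp only [List.map_cons, prodl_cons]

end Premorphism

section Main
variable {S T : Type*} [DecidableEq S] (LS : LRSgpd S) (LT : LRSgpd T) (φ : S → T)
variable (hφ : IsPremorphism LS LT φ)
include hφ

lemma main_mul {A B : Finset S} {a b : S} (hA : szCond LS A a) (hB : szCond LS B b)
    (hab : LS.composable a b) (hC : szCond LS (szSet LS A a B b) (LS.mul a b)) :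
    LT.composable (prodl LT (A.toList.map (fun z => LT.star (φ z))) (φ a))
      (prodl LT (B.toList.map (fun z => LT.star (φ z))) (φ b)) ∧
    prodl LT ((szSet LS A a B b).toList.map (fun z => LT.star (φ z))) (φ (LS.mul a b)) =
      LT.mul (prodl LT (A.toList.map (fun z => LT.star (φ z))) (φ a))
        (prodl LT (B.toList.map (fun z => LT.star (φ z))) (φ b)) := by
  classical
  have hEa := q_idp_E LS LT φ hφ a
  have hE := q_idp_E LS LT φ hφ (LS.mul a b)
  have hUE : Und LT (φ (LS.star a)) (φ (LS.star (LS.mul a b))) := by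
    have hp := hφ.1 _ _ (g_s4 LS hab)
    refine ⟨hE, hp.1, ?_⟩
    have h2 := hp.2.2
    rw [hE, g_c1 LS hab] at h2
    rw [h2, g_idp_mul_self LT hE]
  have hUndC : ∀ c ∈ szSet LS A a B b, Und LT (φ (LS.star a)) (LT.star (φ c)) :=
    fun c hcm => u_down LT hEa hUE (q_und' LS LT φ hφ (hC.2.2 c hcm))
  have hAllA : AllUnd LT (φ (LS.star a)) (A.toList.map (fun z => LT.star (φ z))) := by
    intro x hx; obtain ⟨y, hy, rfl⟩ := List.mem_map.mp hx
    exact q_und' LS LT φ hφ (hA.2.2 y (Finset.mem_toList.mp hy))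
  have hLabsE : LAbs LT (φ (LS.star (LS.mul a b))) (φ (LS.mul a b)) := q_labs LS LT φ hφ _
  have hLabsEa : LAbs LT (φ (LS.star a)) (φ (LS.mul a b)) := labs_down LT hEa hUE hLabsE
  have hLabsa : LAbs LT (φ (LS.star a)) (φ a) := q_labs LS LT φ hφ a
  have hUa : Und LT (φ (LS.star a)) (LT.star (φ a)) := q_und LS LT φ hφ a
  have hmemaz : ∀ z ∈ B, LS.mul a z ∈ szSet LS A a B b := fun z hz =>
    Finset.mem_union_right _ (Finset.mem_image.mpr ⟨z, hz, rfl⟩)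
  have hmemgy : ∀ y ∈ A, LS.mul (LS.star (LS.mul a b)) y ∈ szSet LS A a B b := fun y hy =>
    Finset.mem_union_left _ (Finset.mem_image.mpr ⟨y, hy, rfl⟩)
  have hmov := mov LS LT φ hφ hab B.toList (fun z hz => hB.2.2 z (Finset.mem_toList.mp hz))
  have hPAB := p_mulr LT hEa hAllA hLabsa hmov.1
  refine ⟨hPAB.1, ?_⟩
  rw [hPAB.2, hmov.2]
  have hcuv : ∀ z ∈ B.toList, LT.composable (LT.star (φ a)) (LT.star (φ (LS.mul a z))) := by
    intro z hz
    have haz : LS.composable a z := g_s2 LS hab (hB.2.2 z (Finset.mem_toList.mp hz))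
    exact (g_s1 LT (hφ.1 a z haz).2.1).1
  have hvB : ∀ z ∈ B.toList, Und LT (φ (LS.star a)) (LT.star (φ (LS.mul a z))) :=
    fun z hz => hUndC _ (hmemaz z (Finset.mem_toList.mp hz))
  have hbase1 : LAbs LT (φ (LS.star a)) (LT.mul (LT.star (φ a)) (φ (LS.mul a b))) :=
    (labs_mul LT hEa hUa hLabsEa).2
  have hsplit := p_split LT hEa (fun _ => LT.star (φ a))
    (fun z => LT.star (φ (LS.mul a z))) B.toList hcuv (fun _ _ => hUa) hvB hbase1
  rw [hsplit]
  -- now both sides as single prodl over lists with base φ (mul a b)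
  have hflat : prodl LT (A.toList.map (fun z => LT.star (φ z)))
      (prodl LT (B.toList.flatMap (fun z => [LT.star (φ a), LT.star (φ (LS.mul a z))]))
        (LT.mul (LT.star (φ a)) (φ (LS.mul a b)))) =
      prodl LT (A.toList.map (fun z => LT.star (φ z)) ++
        (B.toList.flatMap (fun z => [LT.star (φ a), LT.star (φ (LS.mul a z))]) ++
          [LT.star (φ a)])) (φ (LS.mul a b)) := by
    rw [prodl_append, prodl_append]
    rfl
  rw [hflat]
  -- AllUnd for the big RHS list
  have hAllBig : AllUnd LT (φ (LS.star a))
      (A.toList.map (fun z => LT.star (φ z)) ++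
        (B.toList.flatMap (fun z => [LT.star (φ a), LT.star (φ (LS.mul a z))]) ++
          [LT.star (φ a)])) := by
    intro x hx
    rcases List.mem_append.mp hx with h | h
    · exact hAllA x h
    · rcases List.mem_append.mp h with h | h
      · obtain ⟨w, hw, hx2⟩ := List.mem_flatMap.mp h
        have hx' : x = LT.star (φ a) ∨ x = LT.star (φ (LS.mul a w)) := by simpa using hx2
        rcases hx' with rfl | rfl
        · exact hUa
        · exact hvB w hw
      · have : x = LT.star (φ a) := by simpa using h
        exact this ▸ hUa
  -- set congruence on RHS list
  have hmemiff : ∀ x, x ∈ (A.toList.map (fun z => LT.star (φ z)) ++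
        (B.toList.flatMap (fun z => [LT.star (φ a), LT.star (φ (LS.mul a z))]) ++
          [LT.star (φ a)])) ↔
      x ∈ (A.toList.map (fun z => LT.star (φ z)) ++
        (B.toList.map (fun z => LS.mul a z)).map (fun z => LT.star (φ z))) := by
    intro x
    simp only [List.mem_append, List.mem_map, List.mem_flatMap, List.mem_cons,
      List.mem_singleton, List.not_mem_nil, or_false, Finset.mem_toList]
    constructor
    · rintro (h | ⟨w, hw, (rfl | rfl)⟩ | rfl)
      · exact Or.inl h
      · exact Or.inl ⟨a, hA.1, rfl⟩
      · exact Or.inr ⟨LS.mul a w, ⟨w, hw, rfl⟩, rfl⟩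
      · exact Or.inl ⟨a, hA.1, rfl⟩
    · rintro (h | ⟨c, ⟨w, hw, rfl⟩, rfl⟩)
      · exact Or.inl h
      · exact Or.inr (Or.inl ⟨w, hw, Or.inr rfl⟩)
  rw [p_setcongr LT hEa hmemiff hAllBig hLabsEa]
  -- now handle LHS : set congruence to (map g A ++ map h B) then bridge
  have hmemiff2 : ∀ x, x ∈ (szSet LS A a B b).toList.map (fun z => LT.star (φ z)) ↔
      x ∈ ((A.toList.map (fun y => LS.mul (LS.star (LS.mul a b)) y) ++
        B.toList.map (fun z => LS.mul a z)).map (fun z => LT.star (φ z))) := by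
    intro x
    simp only [List.mem_map, List.mem_append, Finset.mem_toList, szSet,
      Finset.mem_union, Finset.mem_image]
  have hAllLHS : AllUnd LT (φ (LS.star a))
      ((szSet LS A a B b).toList.map (fun z => LT.star (φ z))) := by
    intro x hx; obtain ⟨c, hcm, rfl⟩ := List.mem_map.mp hx
    exact hUndC c (Finset.mem_toList.mp hcm)
  rw [p_setcongr LT hEa hmemiff2 hAllLHS hLabsEa]
  -- bridge
  have hkey : ∀ y ∈ A.toList,
      LT.mul ((fun y => LT.star (φ (LS.mul (LS.star (LS.mul a b)) y))) y)
          (φ (LS.star (LS.mul a b))) =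
        LT.mul ((fun y => LT.star (φ y)) y) (φ (LS.star (LS.mul a b))) := by
    intro y hy
    have hya : LS.star y = LS.star a := hA.2.2 y (Finset.mem_toList.mp hy)
    have hsy : LS.composable (LS.star (LS.mul a b)) y := g_s2 LS (g_s3 LS hab) hya
    have hp := hφ.1 (LS.star (LS.mul a b)) y hsy
    have hc1 : LT.composable (φ (LS.star (LS.mul a b))) (φ y) := hp.1
    have hc2 : LT.composable (φ (LS.star (LS.mul a b)))
        (φ (LS.mul (LS.star (LS.mul a b)) y)) := by
      have := hp.2.1; rwa [hE] at this
    have e2 : LT.mul (φ (LS.star (LS.mul a b))) (φ y) =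
        LT.mul (φ (LS.star (LS.mul a b))) (φ (LS.mul (LS.star (LS.mul a b)) y)) := by
      have := hp.2.2; rwa [hE] at this
    have e4 : LT.mul (φ (LS.star (LS.mul a b))) (LT.star (φ y)) =
        LT.mul (φ (LS.star (LS.mul a b)))
          (LT.star (φ (LS.mul (LS.star (LS.mul a b)) y))) := by
      rw [← g_lr3' LT hE hc1, ← g_lr3' LT hE hc2, e2]
    have hUy : Und LT (φ (LS.star a)) (LT.star (φ y)) := q_und' LS LT φ hφ hya
    have hUgy : Und LT (φ (LS.star a)) (LT.star (φ (LS.mul (LS.star (LS.mul a b)) y))) :=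
      hUndC _ (hmemgy y (Finset.mem_toList.mp hy))
    have c1 := (u_comp LT hEa hUgy hUE).2.1
    have c2 := (u_comp LT hEa hUy hUE).2.1
    simp only
    rw [c1, c2, e4]
  have hbridge := p_bridge LT hEa hUE
    (fun y => LT.star (φ (LS.mul (LS.star (LS.mul a b)) y))) (fun y => LT.star (φ y))
    hLabsEa ⟨hLabsE.1, hLabsE.2⟩ A.toList
    (fun y hy => hUndC _ (hmemgy y (Finset.mem_toList.mp hy)))
    (fun y hy => q_und' LS LT φ hφ (hA.2.2 y (Finset.mem_toList.mp hy)))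
    hkey
    ((B.toList.map (fun z => LS.mul a z)).map (fun z => LT.star (φ z)))
    (by
      intro x hx
      obtain ⟨c, hcm, rfl⟩ := List.mem_map.mp hx
      obtain ⟨z, hz, rfl⟩ := List.mem_map.mp hcm
      exact hUndC _ (hmemaz z (Finset.mem_toList.mp hz)))
  -- finally: rewrite LHS map-of-append into appended maps and conclude
  rw [List.map_append]
  have hmapmap : (A.toList.map (fun y => LS.mul (LS.star (LS.mul a b)) y)).map
      (fun z => LT.star (φ z)) =
      A.toList.map (fun y => LT.star (φ (LS.mul (LS.star (LS.mul a b)) y))) := by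
    rw [List.map_map]; rfl
  rw [hmapmap]
  exact hbridge

lemma main_star {A : Finset S} {a : S} (hA : szCond LS A a) :
    prodl LT (A.toList.map (fun z => LT.star (φ z))) (φ (LS.star a)) =
      LT.star (prodl LT (A.toList.map (fun z => LT.star (φ z))) (φ a)) := by
  classical
  have hEa := q_idp_E LS LT φ hφ a
  have hAllA : AllUnd LT (φ (LS.star a)) (A.toList.map (fun z => LT.star (φ z))) := by
    intro x hx; obtain ⟨y, hy, rfl⟩ := List.mem_map.mp hx
    exact q_und' LS LT φ hφ (hA.2.2 y (Finset.mem_toList.mp hy))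
  have hLabsa := q_labs LS LT φ hφ a
  have hUa := q_und LS LT φ hφ a
  rw [p_star LT hEa hAllA hLabsa]
  have hLabsE : LAbs LT (φ (LS.star a)) (φ (LS.star a)) :=
    ⟨g_idp_comp_self LT hEa, g_idp_mul_self LT hEa⟩
  have hAll' : AllUnd LT (φ (LS.star a))
      (A.toList.map (fun z => LT.star (φ z)) ++ [LT.star (φ a)]) := by
    intro x hx
    rcases List.mem_append.mp hx with h | h
    · exact hAllA x h
    · have : x = LT.star (φ a) := by simpa using h
      exact this ▸ hUa
  have hmem : ∀ x, x ∈ (A.toList.map (fun z => LT.star (φ z)) ++ [LT.star (φ a)]) ↔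
      x ∈ A.toList.map (fun z => LT.star (φ z)) := by
    intro x
    rw [List.mem_append]
    constructor
    · rintro (h | h)
      · exact h
      · have : x = LT.star (φ a) := by simpa using h
        exact this ▸ List.mem_map.mpr ⟨a, Finset.mem_toList.mpr hA.1, rfl⟩
    · exact Or.inl
  calc prodl LT (A.toList.map (fun z => LT.star (φ z))) (φ (LS.star a))
      = prodl LT (A.toList.map (fun z => LT.star (φ z)) ++ [LT.star (φ a)])
          (φ (LS.star a)) := (p_setcongr LT hEa hmem hAll' hLabsE).symm
    _ = prodl LT (A.toList.map (fun z => LT.star (φ z)))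
          (LT.mul (LT.star (φ a)) (φ (LS.star a))) := by rw [prodl_append]; rfl
    _ = prodl LT (A.toList.map (fun z => LT.star (φ z))) (LT.star (φ a)) := by
          rw [hUa.2.2]

lemma main_iota (s : S) :
    prodl LT (((insert (LS.star s) {s} : Finset S)).toList.map (fun z => LT.star (φ z)))
      (φ s) = φ s := by
  classical
  have hEs := q_idp_E LS LT φ hφ s
  have hUs := q_und LS LT φ hφ s
  have hUss : Und LT (φ (LS.star s)) (LT.star (φ (LS.star s))) :=
    q_und' LS LT φ hφ (g_star_star LS s)
  have hLabss := q_labs LS LT φ hφ s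
  have hAll : AllUnd LT (φ (LS.star s))
      (((insert (LS.star s) {s} : Finset S)).toList.map (fun z => LT.star (φ z))) := by
    intro x hx
    obtain ⟨y, hy, rfl⟩ := List.mem_map.mp hx
    have : y = LS.star s ∨ y = s := by simpa using Finset.mem_toList.mp hy
    rcases this with rfl | rfl
    · exact hUss
    · exact hUs
  have hmem : ∀ x,
      x ∈ (((insert (LS.star s) {s} : Finset S)).toList.map (fun z => LT.star (φ z))) ↔
      x ∈ [LT.star (φ (LS.star s)), LT.star (φ s)] := by
    intro x
    simp only [List.mem_map, Finset.mem_toList, Finset.mem_insert, Finset.mem_singleton,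
      List.mem_cons, List.mem_singleton, List.not_mem_nil, or_false]
    constructor
    · rintro ⟨y, (rfl | rfl), rfl⟩
      · exact Or.inl rfl
      · exact Or.inr rfl
    · rintro (rfl | rfl)
      · exact ⟨LS.star s, Or.inl rfl, rfl⟩
      · exact ⟨s, Or.inr rfl, rfl⟩
  rw [p_setcongr LT hEs hmem hAll hLabss]
  show LT.mul (LT.star (φ (LS.star s))) (LT.mul (LT.star (φ s)) (φ s)) = φ s
  rw [(LT.lr1 (φ s)).2, hEs, (q_labs LS LT φ hφ s).2]

end Main

section Z
variable {S T : Type*} [DecidableEq S] (LS : LRSgpd S) (LT : LRSgpd T)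
  (LZ : LRSgpd {p : Finset S × S // szCond LS p.1 p.2})
  (hc : ∀ p q, LZ.composable p q ↔ LS.composable p.1.2 q.1.2)
  (hm : ∀ p q, LZ.composable p q →
    (LZ.mul p q).1 = (szSet LS p.1.1 p.1.2 q.1.1 q.1.2, LS.mul p.1.2 q.1.2))
  (hst : ∀ p, (LZ.star p).1 = (p.1.1, LS.star p.1.2))
  (ι : S → {p : Finset S × S // szCond LS p.1 p.2})
  (hι : ∀ s, (ι s).1 = (insert (LS.star s) {s}, s))
  (φ : S → T)

include hc hm hst hι

lemma uniq (hφ : IsPremorphism LS LT φ) (ψ : {p : Finset S × S // szCond LS p.1 p.2} → T)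
    (hψ : IsRestrMorphism LZ LT ψ) (hψι : φ = ψ ∘ ι) :
    ∀ p, ψ p = prodl LT (p.1.1.toList.map (fun z => LT.star (φ z))) (φ p.1.2) := by
  classical
  suffices H : ∀ n p, p.1.1.card ≤ n →
      ψ p = prodl LT (p.1.1.toList.map (fun z => LT.star (φ z))) (φ p.1.2) from
    fun p => H p.1.1.card p le_rfl
  intro n
  induction n with
  | zero =>
    intro p hle
    exact absurd (Finset.card_eq_zero.mp (Nat.le_zero.mp hle) ▸ p.2.1) (by simp)
  | succ n ihn =>
    intro p hle
    obtain ⟨⟨A, a⟩, hA⟩ := p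
    have hle' : A.card ≤ n + 1 := hle
    show ψ ⟨(A, a), hA⟩ = prodl LT (A.toList.map (fun z => LT.star (φ z))) (φ a)
    by_cases hbase : ∀ c ∈ A, c = LS.star a ∨ c = a
    · -- p = ι a
      have hAeq : A = insert (LS.star a) {a} := by
        apply Finset.ext
        intro x
        simp only [Finset.mem_insert, Finset.mem_singleton]
        constructor
        · exact hbase x
        · rintro (rfl | rfl)
          · exact hA.2.1
          · exact hA.1
      have hpeq : (⟨(A, a), hA⟩ : {p : Finset S × S // szCond LS p.1 p.2}) = ι a := by
        apply Subtype.ext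
        rw [hι a]
        exact Prod.ext (by simp [hAeq]) rfl
      have hφa : ψ (ι a) = φ a := by rw [hψι]; rfl
      rw [hpeq, hφa, hAeq]
      exact (main_iota LS LT φ hφ a).symm
    · push_neg at hbase
      obtain ⟨c, hcA, hcns, hcna⟩ := hbase
      have hstarc : LS.star c = LS.star a := hA.2.2 c hcA
      have hA' : szCond LS (A.erase c) a :=
        ⟨Finset.mem_erase.mpr ⟨fun h => hcna h.symm, hA.1⟩,
         Finset.mem_erase.mpr ⟨fun h => hcns h.symm, hA.2.1⟩,
         fun x hx => hA.2.2 x (Finset.mem_of_mem_erase hx)⟩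
      have hcompS : LS.composable (LS.star c) a := by
        rw [hstarc]; exact (LS.lr1 a).1
      have h12c : (LZ.star (ι c)).1.2 = LS.star c := by rw [hst, hι]
      have h11c : (LZ.star (ι c)).1.1 = insert (LS.star c) {c} := by rw [hst, hι]
      have hcomp : LZ.composable (LZ.star (ι c))
          (⟨(A.erase c, a), hA'⟩ : {p : Finset S × S // szCond LS p.1 p.2}) := by
        rw [hc, h12c]
        exact hcompS
      have hmulseq : LS.mul (LS.star c) a = a := by
        rw [hstarc]; exact (LS.lr1 a).2
      have key := hm (LZ.star (ι c)) (⟨(A.erase c, a), hA'⟩) hcomp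
      rw [h12c, h11c] at key
      have e1 : ((⟨(A.erase c, a), hA'⟩ : {p : Finset S × S // szCond LS p.1 p.2})).1.1
          = A.erase c := rfl
      have e2 : ((⟨(A.erase c, a), hA'⟩ : {p : Finset S × S // szCond LS p.1 p.2})).1.2
          = a := rfl
      rw [e1, e2] at key
      have hset : szSet LS (insert (LS.star c) {c}) (LS.star c) (A.erase c) a = A := by
        apply Finset.ext
        intro x
        simp only [szSet, hmulseq, Finset.mem_union, Finset.mem_image, Finset.mem_insert,
          Finset.mem_singleton]
        constructor
        · rintro (⟨y, hy, rfl⟩ | ⟨y, hy, rfl⟩)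
          · rcases hy with hy | hy
            · subst hy
              rw [hstarc, g_star_mul_self LS a]
              exact hA.2.1
            · subst hy
              have hca : LS.mul (LS.star a) y = y := by
                rw [← hstarc]; exact (LS.lr1 y).2
              rw [hca]
              exact hcA
          · have hya : LS.mul (LS.star a) y = y := by
              rw [← hA.2.2 y (Finset.mem_of_mem_erase hy)]; exact (LS.lr1 y).2
            rw [hstarc, hya]
            exact Finset.mem_of_mem_erase hy
        · intro hx
          by_cases hxc : x = c
          · refine Or.inl ⟨c, Or.inr rfl, ?_⟩
            rw [hxc, ← hstarc]
            exact (LS.lr1 c).2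
          · refine Or.inr ⟨x, Finset.mem_erase.mpr ⟨hxc, hx⟩, ?_⟩
            rw [hstarc, ← hA.2.2 x hx]
            exact (LS.lr1 x).2
      have hdec : LZ.mul (LZ.star (ι c)) (⟨(A.erase c, a), hA'⟩) =
          (⟨(A, a), hA⟩ : {p : Finset S × S // szCond LS p.1 p.2}) := by
        apply Subtype.ext
        rw [key]
        exact Prod.ext hset (by simp [hmulseq])
      have hcard : (A.erase c).card ≤ n := by
        have := Finset.card_erase_lt_of_mem hcA
        omega
      have hIH : ψ (⟨(A.erase c, a), hA'⟩) =
          prodl LT ((A.erase c).toList.map (fun z => LT.star (φ z))) (φ a) :=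
        ihn (⟨(A.erase c, a), hA'⟩) hcard
      have hφc : ψ (ι c) = φ c := by rw [hψι]; rfl
      rw [← hdec, (hψ.1 _ _ hcomp).2, hψ.2, hφc, hIH]
      have hEa := q_idp_E LS LT φ hφ a
      have hLabsa := q_labs LS LT φ hφ a
      have hAllc : AllUnd LT (φ (LS.star a))
          ((c :: (A.erase c).toList).map (fun z => LT.star (φ z))) := by
        intro x hx
        obtain ⟨y, hy, rfl⟩ := List.mem_map.mp hx
        rcases List.mem_cons.mp hy with rfl | hy'
        · exact q_und' LS LT φ hφ hstarc
        · exact q_und' LS LT φ hφ (hA.2.2 y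
            (Finset.mem_of_mem_erase (Finset.mem_toList.mp hy')))
      have hmem : ∀ x, x ∈ ((c :: (A.erase c).toList).map (fun z => LT.star (φ z))) ↔
          x ∈ (A.toList.map (fun z => LT.star (φ z))) := by
        intro x
        simp only [List.mem_map, List.mem_cons, Finset.mem_toList, Finset.mem_erase]
        constructor
        · rintro ⟨y, (hy | hy), rfl⟩
          · exact ⟨y, by rw [hy]; exact hcA, rfl⟩
          · exact ⟨y, hy.2, rfl⟩
        · rintro ⟨y, hy, rfl⟩
          by_cases hyc : y = c
          · exact ⟨y, Or.inl hyc, rfl⟩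
          · exact ⟨y, Or.inr ⟨hyc, hy⟩, rfl⟩
      rw [← p_setcongr LT hEa hmem hAllc hLabsa]
      simp only [List.map_cons, prodl_cons]

lemma iota_star_le (s : S) :
    LZ.composable (LZ.star (ι s)) (ι (LS.star s)) ∧
    LZ.mul (LZ.star (ι s)) (ι (LS.star s)) = LZ.star (ι s) := by
  have h12s : (LZ.star (ι s)).1.2 = LS.star s := by rw [hst, hι]
  have h11s : (LZ.star (ι s)).1.1 = insert (LS.star s) {s} := by rw [hst, hι]
  have h12' : (ι (LS.star s)).1.2 = LS.star s := by rw [hι]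
  have h11' : (ι (LS.star s)).1.1 = insert (LS.star (LS.star s)) {LS.star s} := by rw [hι]
  have hcomp0 : LZ.composable (LZ.star (ι s)) (ι (LS.star s)) := by
    rw [hc, h12s, h12']
    exact g_comp_ss LS s
  refine ⟨hcomp0, ?_⟩
  apply Subtype.ext
  rw [hm _ _ hcomp0, h12s, h11s, h12', h11', hst (ι s), hι s]
  refine Prod.ext ?_ (by simp [g_star_mul_self LS s])
  simp only
  apply Finset.ext
  intro x
  simp only [szSet, g_star_mul_self LS s, g_star_star LS s, Finset.mem_union,
    Finset.mem_image, Finset.mem_insert, Finset.mem_singleton, or_self]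
  constructor
  · rintro (⟨y, (hy | hy), rfl⟩ | ⟨y, hy, rfl⟩)
    · subst hy
      rw [g_star_mul_self LS s]
      exact Or.inl rfl
    · subst hy
      rw [(LS.lr1 y).2]
      exact Or.inr rfl
    · subst hy
      rw [g_star_mul_self LS s]
      exact Or.inl rfl
  · rintro (rfl | rfl)
    · exact Or.inl ⟨LS.star s, Or.inl rfl, g_star_mul_self LS s⟩
    · exact Or.inl ⟨x, Or.inr rfl, (LS.lr1 x).2⟩

lemma iota_mul_eq {s t : S} (h : LS.composable s t) :
    LZ.composable (ι s) (ι t) ∧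
    LZ.composable (LZ.star (ι s)) (ι (LS.mul s t)) ∧
    LZ.mul (ι s) (ι t) = LZ.mul (LZ.star (ι s)) (ι (LS.mul s t)) := by
  have h12s : (ι s).1.2 = s := by rw [hι]
  have h12t : (ι t).1.2 = t := by rw [hι]
  have h12st : (ι (LS.mul s t)).1.2 = LS.mul s t := by rw [hι]
  have hsts2 : (LZ.star (ι s)).1.2 = LS.star s := by rw [hst, hι]
  have c1 : LZ.composable (ι s) (ι t) := by rw [hc, h12s, h12t]; exact h
  have c2 : LZ.composable (LZ.star (ι s)) (ι (LS.mul s t)) := by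
    rw [hc, hsts2, h12st]
    exact (g_s5 LS h).1
  refine ⟨c1, c2, ?_⟩
  apply Subtype.ext
  rw [hm _ _ c1, hm _ _ c2, h12s, h12t, h12st, hsts2, hι s, hι t, hι (LS.mul s t),
    hst (ι s), hι s]
  refine Prod.ext ?_ (by simp [(g_s5 LS h).2])
  simp only
  apply Finset.ext
  intro x
  have hcomm := g_comm LS (g_idp_star LS (LS.mul s t)) (g_idp_star LS s) (g_s4 LS h)
  simp only [szSet, (g_s5 LS h).2, Finset.mem_union, Finset.mem_image, Finset.mem_insert,
    Finset.mem_singleton]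
  constructor
  · rintro (⟨y, hy, rfl⟩ | ⟨y, (hy | hy), rfl⟩)
    · exact Or.inl ⟨y, hy, rfl⟩
    · rw [hy]
      exact Or.inl ⟨s, Or.inr rfl, (LS.lr4 s t h).symm⟩
    · rw [hy]
      exact Or.inr ⟨LS.mul s t, Or.inr rfl, (g_s5 LS h).2⟩
  · rintro (⟨y, hy, rfl⟩ | ⟨y, (hy | hy), rfl⟩)
    · exact Or.inl ⟨y, hy, rfl⟩
    · rw [hy]
      exact Or.inl ⟨LS.star s, Or.inl rfl, hcomm.2⟩
    · rw [hy]
      exact Or.inr ⟨t, Or.inr rfl, (g_s5 LS h).2.symm⟩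

lemma conv (φb : {p : Finset S × S // szCond LS p.1 p.2} → T)
    (hψ : IsRestrMorphism LZ LT φb) : IsPremorphism LS LT (φb ∘ ι) := by
  constructor
  · intro s t h
    obtain ⟨c1, c2, keyA⟩ := iota_mul_eq LS LZ hc hm hst ι hι h
    have r1 := hψ.1 _ _ c1
    have r2 := hψ.1 _ _ c2
    refine ⟨r1.1, ?_, ?_⟩
    · simp only [Function.comp_apply]
      have := r2.1
      rwa [hψ.2 (ι s)] at this
    · simp only [Function.comp_apply]
      rw [← r1.2, keyA, r2.2, hψ.2 (ι s)]
  · intro s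
    obtain ⟨hcomp0, hord⟩ := iota_star_le LS LZ hc hm hst ι hι s
    have r := hψ.1 _ _ hcomp0
    constructor
    · simp only [Function.comp_apply]
      rw [g_star_star LT, ← hψ.2 (ι s)]
      exact r.1
    · simp only [Function.comp_apply]
      rw [g_star_star LT, ← hψ.2 (ι s), ← r.2, hord]

end Z
end Sz

open Sz in
theorem stmt19 {S T : Type*} [DecidableEq S] (LS : LRSgpd S) (LT : LRSgpd T)
    (LZ : LRSgpd {p : Finset S × S // szCond LS p.1 p.2})
    (hc : ∀ p q, LZ.composable p q ↔ LS.composable p.1.2 q.1.2)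
    (hm : ∀ p q, LZ.composable p q →
      (LZ.mul p q).1 = (szSet LS p.1.1 p.1.2 q.1.1 q.1.2, LS.mul p.1.2 q.1.2))
    (hst : ∀ p, (LZ.star p).1 = (p.1.1, LS.star p.1.2))
    (ι : S → {p : Finset S × S // szCond LS p.1 p.2})
    (hι : ∀ s, (ι s).1 = (insert (LS.star s) {s}, s))
    (φ : S → T) :
    (IsPremorphism LS LT φ →
      ∃! φb, IsRestrMorphism LZ LT φb ∧ φ = φb ∘ ι) ∧
    (∀ φb, IsRestrMorphism LZ LT φb → IsPremorphism LS LT (φb ∘ ι)) := by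
  constructor
  · intro hφ
    refine ⟨fun p => prodl LT (p.1.1.toList.map (fun z => LT.star (φ z))) (φ p.1.2),
      ⟨⟨?_, ?_⟩, ?_⟩, ?_⟩
    · intro p q hpq
      have hab := (hc p q).mp hpq
      have hmeq := hm p q hpq
      have h1 : (LZ.mul p q).1.1 = szSet LS p.1.1 p.1.2 q.1.1 q.1.2 := by rw [hmeq]
      have h2 : (LZ.mul p q).1.2 = LS.mul p.1.2 q.1.2 := by rw [hmeq]
      have hC : szCond LS (szSet LS p.1.1 p.1.2 q.1.1 q.1.2) (LS.mul p.1.2 q.1.2) := by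
        rw [← h1, ← h2]; exact (LZ.mul p q).2
      have hmm := main_mul LS LT φ hφ p.2 q.2 hab hC
      refine ⟨hmm.1, ?_⟩
      show prodl LT ((LZ.mul p q).1.1.toList.map (fun z => LT.star (φ z)))
          (φ (LZ.mul p q).1.2) =
        LT.mul (prodl LT (p.1.1.toList.map (fun z => LT.star (φ z))) (φ p.1.2))
          (prodl LT (q.1.1.toList.map (fun z => LT.star (φ z))) (φ q.1.2))
      rw [h1, h2]
      exact hmm.2
    · intro p
      show prodl LT ((LZ.star p).1.1.toList.map (fun z => LT.star (φ z)))
          (φ (LZ.star p).1.2) =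
        LT.star (prodl LT (p.1.1.toList.map (fun z => LT.star (φ z))) (φ p.1.2))
      have h1 : (LZ.star p).1.1 = p.1.1 := by rw [hst]
      have h2 : (LZ.star p).1.2 = LS.star p.1.2 := by rw [hst]
      rw [h1, h2]
      exact main_star LS LT φ hφ p.2
    · funext s
      show φ s = prodl LT ((ι s).1.1.toList.map (fun z => LT.star (φ z))) (φ (ι s).1.2)
      have h1 : (ι s).1.1 = insert (LS.star s) {s} := by rw [hι]
      have h2 : (ι s).1.2 = s := by rw [hι]
      rw [h1, h2]
      exact (main_iota LS LT φ hφ s).symm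
    · rintro ψ ⟨hψm, hψι⟩
      funext p
      exact uniq LS LT LZ hc hm hst ι hι φ hφ ψ hψm hψι p
  · intro φb hψ
    exact conv LS LT LZ hc hm hst ι hι φb hψ
end
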